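/- arXiv:2309.06944 — 6 statements merged into one kernel-verified Lean document; each statement's English description precedes it below -/
import Mathlib

section
/- Every Klee-graph is Hamiltonian. -/
open SimpleGraph
open scoped Classical

/-- `H` is obtained from `G` by expanding the vertex `v` into a triangle. -/
def IsTriangleExpansion {V W : Type} (G : SimpleGraph V) (H : SimpleGraph W) : Prop :=
  ∃ (v : V) (t : Fin 3 → W) (g : {u : V // u ≠ v} → W) (σ : Fin 3 → {u : V // u ≠ v}),
    Function.Injective t ∧ Function.Injective g ∧
    (Set.range t ∩ Set.range g = ∅) ∧ (Set.range t ∪ Set.range g = Set.univ) ∧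
    Function.Injective σ ∧ (∀ i, G.Adj v (σ i).1) ∧
    (∀ u : {u : V // u ≠ v}, G.Adj v u.1 → u ∈ Set.range σ) ∧
    (∀ i j, H.Adj (t i) (t j) ↔ i ≠ j) ∧
    (∀ a b : {u : V // u ≠ v}, H.Adj (g a) (g b) ↔ G.Adj a.1 b.1) ∧
    (∀ i a, H.Adj (t i) (g a) ↔ a = σ i)

/-- Klee-graphs: `K₄` is Klee, and any triangle expansion of a Klee-graph is Klee. -/
inductive IsKlee : ∀ {V : Type}, SimpleGraph V → Prop
  | base {V : Type} (G : SimpleGraph V) (e : V ≃ Fin 4)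
      (h : ∀ a b : V, G.Adj a b ↔ a ≠ b) : IsKlee G
  | expand {V W : Type} (G : SimpleGraph V) (H : SimpleGraph W)
      (hG : IsKlee G) (h : IsTriangleExpansion G H) : IsKlee H

/-- A perfect matching given as a set of edges. -/
def IsPerfectMatchingSet {V : Type} (G : SimpleGraph V) (M : Set (Sym2 V)) : Prop :=
  M ⊆ G.edgeSet ∧ ∀ v : V, ∃! e : Sym2 V, e ∈ M ∧ v ∈ e

/-- A cubic (3-regular) graph. -/
def IsCubic {V : Type} (G : SimpleGraph V) : Prop :=
  ∀ v : V, (G.neighborSet v).ncard = 3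

/-- A circuit: a connected 2-regular subgraph. -/
def IsCircuitSub {V : Type} {G : SimpleGraph V} (C : G.Subgraph) : Prop :=
  C.coe.Connected ∧ ∀ v ∈ C.verts, (C.neighborSet v).ncard = 2

/-- A collection of pairwise vertex-disjoint circuits. -/
def IsDisjointCircuitCollection {V : Type} (G : SimpleGraph V) (𝒞 : Set G.Subgraph) : Prop :=
  (∀ C ∈ 𝒞, IsCircuitSub C) ∧ 𝒞.Pairwise fun C D => Disjoint C.verts D.verts

/-- The edge cut determined by a vertex set `A`. -/
def cutEdges {V : Type} (G : SimpleGraph V) (A : Set V) : Set (Sym2 V) :=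
  {e | e ∈ G.edgeSet ∧ ∃ a b : V, e = s(a, b) ∧ a ∈ A ∧ b ∉ A}

/-- `G` is cyclically `k`-edge-connected: every cyclic edge-cut has at least `k` edges. -/
def IsCyclicallyEdgeConnected {V : Type} (G : SimpleGraph V) (k : ℕ) : Prop :=
  ∀ A : Set V, ¬(G.induce A).IsAcyclic → ¬(G.induce Aᶜ).IsAcyclic →
    k ≤ (cutEdges G A).ncard

/-- A triangle of `G`, as a vertex set. -/
def IsTriangleSet {V : Type} (G : SimpleGraph V) (T : Set V) : Prop :=
  ∃ a b c : V, T = {a, b, c} ∧ G.Adj a b ∧ G.Adj a c ∧ G.Adj b c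

/-- An edge lying on a cycle of length `n`. -/
def LiesOnCycleOfLength {V : Type} [DecidableEq V] (G : SimpleGraph V) (e : Sym2 V) (n : ℕ) : Prop :=
  ∃ (a : V) (w : G.Walk a a), w.IsCycle ∧ w.length = n ∧ e ∈ w.edges

/-- The complement of `M` in `G` is a Hamiltonian cycle. -/
def ComplementIsHamCycle {V : Type} [DecidableEq V] (G : SimpleGraph V) (M : Set (Sym2 V)) : Prop :=
  ∃ (a : V) (w : G.Walk a a), w.IsHamiltonianCycle ∧ {e | e ∈ w.edges} = G.edgeSet \ M

/-- A `1⁺`-factor: a spanning set of edges with all degrees at least one. -/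
def Is1PlusFactor {V : Type} (G : SimpleGraph V) (F : Set (Sym2 V)) : Prop :=
  F ⊆ G.edgeSet ∧ ∀ v : V, ∃ e ∈ F, v ∈ e

/-- The Klee ladder `KL_{2k+2}`: the grid `P₂ □ P_k` together with two adjacent
vertices `inr 0` and `inr 1` joined to the first and last rung, respectively. -/
def kleeLadder (k : ℕ) : SimpleGraph ((Fin 2 × Fin k) ⊕ Fin 2) :=
  SimpleGraph.fromRel fun a b =>
    (∃ i j j', a = .inl (i, j) ∧ b = .inl (i, j') ∧ (j' : ℕ) = (j : ℕ) + 1) ∨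
    (∃ i i' j, a = .inl (i, j) ∧ b = .inl (i', j) ∧ i ≠ i') ∨
    (∃ i j, a = .inr 0 ∧ b = .inl (i, j) ∧ (j : ℕ) = 0) ∨
    (∃ i j, a = .inr 1 ∧ b = .inl (i, j) ∧ (j : ℕ) = k - 1) ∨
    (a = .inr 0 ∧ b = .inr 1)

/-- The ladder (`k`-sided prism) `L_{2k} = C_k □ K₂`. -/
def ladder (k : ℕ) : SimpleGraph (Fin 2 × ZMod k) :=
  SimpleGraph.fromRel fun a b => (a.1 = b.1 ∧ b.2 = a.2 + 1) ∨ (a.2 = b.2 ∧ a.1 ≠ b.1)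

/-- The Möbius ladder `ML_{2k}`: a `2k`-cycle plus all antipodal chords. -/
def mobiusLadder (k : ℕ) : SimpleGraph (ZMod (2 * k)) :=
  SimpleGraph.fromRel fun a b => b = a + 1 ∨ b = a + (k : ZMod (2 * k))

/-- The quasi-ladder `QL_{2m+4}`: the grid `P₂ □ P_m` together with a 4-cycle
on four new vertices `inr (i, 0)` (joined to the first rung) and
`inr (i, 1)` (joined to the last rung). -/
def quasiLadder (m : ℕ) : SimpleGraph ((Fin 2 × Fin m) ⊕ (Fin 2 × Fin 2)) :=
  SimpleGraph.fromRel fun a b =>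
    (∃ i j j', a = .inl (i, j) ∧ b = .inl (i, j') ∧ (j' : ℕ) = (j : ℕ) + 1) ∨
    (∃ i i' j, a = .inl (i, j) ∧ b = .inl (i', j) ∧ i ≠ i') ∨
    (∃ i i', a = .inr (i, 0) ∧ b = .inr (i', 1)) ∨
    (∃ i j, a = .inr (i, 0) ∧ b = .inl (i, j) ∧ (j : ℕ) = 0) ∨
    (∃ i j, a = .inr (i, 1) ∧ b = .inl (i, j) ∧ (j : ℕ) = m - 1)

/-- The graph obtained from `G` by deleting the endvertices `u, v` of an edge and
adding the edges `αβ` and `γδ`. -/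
def reducedGraph {V : Type} (G : SimpleGraph V) (u v α β γ δ : V) :
    SimpleGraph {x : V // x ≠ u ∧ x ≠ v} :=
  SimpleGraph.fromRel fun a b =>
    G.Adj a.1 b.1 ∨ (a.1 = α ∧ b.1 = β) ∨ (a.1 = γ ∧ b.1 = δ)

/-- The cyclic edge-connectivity of `G`. -/
noncomputable def cyclicEdgeConnectivity {V : Type} [Fintype V] (G : SimpleGraph V) : ℕ :=
  if ∃ A : Set V, ¬(G.induce A).IsAcyclic ∧ ¬(G.induce Aᶜ).IsAcyclic then
    sInf {n | ∃ A : Set V, ¬(G.induce A).IsAcyclic ∧ ¬(G.induce Aᶜ).IsAcyclic ∧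
      (cutEdges G A).ncard = n}
  else G.edgeSet.ncard - Fintype.card V + 1


section Aux

open SimpleGraph.Walk

private lemma exists_third (i j : Fin 3) : ∃ k : Fin 3, k ≠ i ∧ k ≠ j := by
  fin_cases i <;> fin_cases j <;> decide

private lemma ham_rotate {α : Type} [DecidableEq α] {G : SimpleGraph α} {a b : α}
    {p : G.Walk a a} (hp : p.IsHamiltonianCycle) (hb : b ∈ p.support) :
    (p.rotate b hb).IsHamiltonianCycle := by
  rw [isHamiltonianCycle_iff_isCycle_and_support_count_tail_eq_one] at hp ⊢
  exact ⟨hp.1.rotate hb, fun x => ((support_rotate p b hb).perm.count_eq x).trans (hp.2 x)⟩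

/-- The lifting map from `V` to `W`. -/
private noncomputable def liftFun {V W : Type} {v : V} (g : {u : V // u ≠ v} → W) (w0 : W)
    (u : V) : W :=
  if h : u = v then w0 else g ⟨u, h⟩

private lemma lift_walk {V W : Type} {G : SimpleGraph V} {H : SimpleGraph W} {v : V}
    (g : {u : V // u ≠ v} → W) (w0 : W)
    (hGH : ∀ a b : {u : V // u ≠ v}, H.Adj (g a) (g b) ↔ G.Adj a.1 b.1) :
    ∀ {x y : V} (q : G.Walk x y) (hx : x ≠ v) (hy : y ≠ v),
      (∀ u ∈ q.support, u ≠ v) →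
      ∃ Q : H.Walk (g ⟨x, hx⟩) (g ⟨y, hy⟩),
        Q.support = q.support.map (liftFun g w0) ∧
        ∀ e ∈ Q.edges, ∃ a b : {u : V // u ≠ v}, e = s(g a, g b) := by
  intro x y q
  induction q with
  | nil =>
    intro hx hy _
    exact ⟨.nil, by simp [liftFun, hx], by simp⟩
  | @cons x x' y h q ih =>
    intro hx hy hq
    have hx' : x' ≠ v := hq x' (by simp)
    obtain ⟨Q, hs, he⟩ := ih hx' hy (fun u hu => hq u (by simp [hu]))
    have hadj : H.Adj (g ⟨x, hx⟩) (g ⟨x', hx'⟩) := (hGH _ _).2 h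
    refine ⟨.cons hadj Q, by simp [hs, liftFun, hx], ?_⟩
    intro e heh
    rw [Walk.edges_cons, List.mem_cons] at heh
    rcases heh with rfl | heh
    · exact ⟨_, _, rfl⟩
    · exact he e heh

private lemma klee_aux : ∀ {V : Type} (G : SimpleGraph V), IsKlee G →
    ∃ a, ∃ p : G.Walk a a, p.IsHamiltonianCycle := by
  intro V G hG
  induction hG with
  | base G e hK =>
    have hAdj : ∀ i j : Fin 4, i ≠ j → G.Adj (e.symm i) (e.symm j) := by
      intro i j hij
      exact (hK _ _).2 (fun hEq => hij (e.symm.injective hEq))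
    refine ⟨e.symm 0,
      Walk.cons (hAdj 0 1 (by decide))
        (Walk.cons (hAdj 1 2 (by decide))
          (Walk.cons (hAdj 2 3 (by decide))
            (Walk.cons (hAdj 3 0 (by decide)) Walk.nil))), ?_⟩
    rw [isHamiltonianCycle_iff_isCycle_and_support_count_tail_eq_one]
    constructor
    · rw [cons_isCycle_iff]
      constructor
      · apply IsPath.mk'
        simp only [Walk.support_cons, Walk.support_nil]
        have : [e.symm 1, e.symm 2, e.symm 3, e.symm 0] = List.map e.symm [1, 2, 3, 0] := rfl
        rw [this, List.nodup_map_iff e.symm.injective]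
        decide
      · simp only [Walk.edges_cons, Walk.edges_nil, List.mem_cons, List.not_mem_nil, or_false,
          Sym2.eq_iff, e.symm.injective.eq_iff]
        decide
    · intro x
      have hx : x = e.symm (e x) := (e.symm_apply_apply x).symm
      simp only [Walk.support_cons, Walk.support_nil, List.tail_cons]
      rw [hx]
      have : [e.symm 1, e.symm 2, e.symm 3, e.symm 0] = List.map e.symm [1, 2, 3, 0] := rfl
      rw [this, List.count_map_of_injective _ _ e.symm.injective]
      generalize e x = i
      fin_cases i <;> rfl
  | @expand V' W' G H hG h ih =>
    clear hG
    obtain ⟨a, p, hp⟩ := ih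
    obtain ⟨v, t, g, σ, ht_inj, hg_inj, hdisj, huniv, hσ_inj, hσ_adj, hσ_surj, hTT, hGG, hTG⟩ := h
    have hne_tg : ∀ (m : Fin 3) (b : {u // u ≠ v}), t m ≠ g b := by
      intro m b hEq
      have : t m ∈ Set.range t ∩ Set.range g := ⟨⟨m, rfl⟩, ⟨b, hEq.symm⟩⟩
      rw [hdisj] at this
      exact this
    have hv : v ∈ p.support := hp.mem_support v
    have hp' : (p.rotate v hv).IsHamiltonianCycle := ham_rotate hp hv
    revert hp'
    generalize p.rotate v hv = P
    intro hP
    cases P with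
    | nil => simpa using hP.isCycle.three_le_length
    | @cons _ x _ hadj q =>
      have hlen : 3 ≤ q.length + 1 := by
        simpa using hP.isCycle.three_le_length
      rw [isHamiltonianCycle_iff_isCycle_and_support_count_tail_eq_one] at hP
      have hcount : ∀ u : V', q.support.count u = 1 := by
        intro u
        have := hP.2 u
        simpa using this
      -- decompose q from the rear
      rcases hr : q.reverse with _ | @⟨_, y, _, hadj2, r⟩
      · exact absurd hadj (G.irrefl)
      · have hq2 : q = Walk.concat r.reverse hadj2.symm := by
          rw [Walk.concat_eq_append, ← Walk.reverse_cons, ← hr, Walk.reverse_reverse]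
          exact hadj2
        subst hq2
        set q' : G.Walk x y := r.reverse with hq'
        clear_value q'
        have hsupp : (q'.concat hadj2.symm).support = q'.support ++ [v] := by
          rw [Walk.support_concat]
        have hx : x ≠ v := hadj.ne'
        have hy : y ≠ v := hadj2.ne'
        have hcount' : ∀ u : V', u ≠ v → q'.support.count u = 1 := by
          intro u hu
          have := hcount u
          rw [hsupp, List.count_append] at this
          simpa [List.count_cons, hu, Ne.symm hu] using this
        have hvq' : v ∉ q'.support := by
          have hc := hcount v
          rw [hsupp, List.count_append] at hc
          have h1 : List.count v [v] = 1 := by simp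
          have h0 : q'.support.count v = 0 := by omega
          exact List.count_eq_zero.1 h0
        have hall : ∀ u ∈ q'.support, u ≠ v := fun u hu hEq => hvq' (hEq ▸ hu)

        have hxy : x ≠ y := by
          intro hEq
          subst hEq
          have hpath : q'.IsPath := by
            apply IsPath.mk'
            apply List.nodup_iff_count_le_one.2
            intro u
            by_cases hu : u = v
            · subst hu; simp [List.count_eq_zero.2 hvq']
            · exact le_of_eq (hcount' u hu)
          rw [Walk.isPath_iff_eq_nil] at hpath
          rw [hpath] at hlen
          simp [Walk.concat_eq_append] at hlen
        obtain ⟨i, hi⟩ := hσ_surj ⟨x, hx⟩ hadj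
        obtain ⟨j, hj⟩ := hσ_surj ⟨y, hy⟩ hadj2
        have hij : i ≠ j := by
          intro hEq
          apply hxy
          have h2 : (⟨x, hx⟩ : {u : V' // u ≠ v}) = ⟨y, hy⟩ := by rw [← hi, ← hj, hEq]
          exact congrArg Subtype.val h2
        obtain ⟨k, hki, hkj⟩ := exists_third i j
        obtain ⟨Q, hQs, hQe⟩ := lift_walk g (t 0) hGG q' hx hy hall
        have h1 : H.Adj (t i) (g ⟨x, hx⟩) := (hTG i ⟨x, hx⟩).2 hi.symm
        have h2 : H.Adj (g ⟨y, hy⟩) (t j) := ((hTG j ⟨y, hy⟩).2 hj.symm).symm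
        have h3 : H.Adj (t j) (t k) := (hTT j k).2 (Ne.symm hkj)
        have h0 : H.Adj (t k) (t i) := (hTT k i).2 hki
        set R : H.Walk (g ⟨y, hy⟩) (t k) := Walk.cons h2 (Walk.cons h3 Walk.nil) with hR
        set Pbig : H.Walk (t i) (t k) := Walk.cons h1 (Q.append R) with hPbig
        have hPsupp : Pbig.support = t i :: (q'.support.map (liftFun g (t 0)) ++ [t j, t k]) := by
          rw [hPbig, Walk.support_cons, Walk.support_append, hQs, hR]
          simp
        -- t's don't appear in the mapped part
        have htnot : ∀ m : Fin 3, t m ∉ q'.support.map (liftFun g (t 0)) := by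
          intro m hm
          obtain ⟨u, hu, hEq⟩ := List.mem_map.1 hm
          have hu' : u ≠ v := hall u hu
          rw [liftFun, dif_neg hu'] at hEq
          exact hne_tg m ⟨u, hu'⟩ hEq.symm
        have hcnt : ∀ w : W', Pbig.support.count w = 1 := by
          intro w
          have hw : w ∈ Set.range t ∪ Set.range g := by rw [huniv]; trivial
          rcases hw with ⟨m, rfl⟩ | ⟨b, rfl⟩
          · have hmap0 : (q'.support.map (liftFun g (t 0))).count (t m) = 0 :=
              List.count_eq_zero.2 (htnot m)
            have hmijk : m = i ∨ m = j ∨ m = k := by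
              have h1 := m.isLt; have h2 := i.isLt; have h3 := j.isLt; have h4 := k.isLt
              have e1 : i.val ≠ j.val := fun hc => hij (Fin.ext hc)
              have e2 : k.val ≠ i.val := fun hc => hki (Fin.ext hc)
              have e3 : k.val ≠ j.val := fun hc => hkj (Fin.ext hc)
              have : m.val = i.val ∨ m.val = j.val ∨ m.val = k.val := by omega
              rcases this with hc | hc | hc
              · exact Or.inl (Fin.ext hc)
              · exact Or.inr (Or.inl (Fin.ext hc))
              · exact Or.inr (Or.inr (Fin.ext hc))
            rw [hPsupp]
            have hik : i ≠ k := Ne.symm hki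
            have hjk : j ≠ k := Ne.symm hkj
            have hji : j ≠ i := Ne.symm hij
            rcases hmijk with rfl | rfl | rfl
            · simp [List.count_cons, List.count_append, hmap0, ht_inj.eq_iff, hij, hik,
                hji, hki, hkj, hjk]
            · simp [List.count_cons, List.count_append, hmap0, ht_inj.eq_iff, hij, hik,
                hji, hki, hkj, hjk]
            · simp [List.count_cons, List.count_append, hmap0, ht_inj.eq_iff, hij, hik,
                hji, hki, hkj, hjk]
          · have hFinj : Function.Injective (liftFun g (t 0)) := by
              intro u1 u2 hEq
              rw [liftFun, liftFun] at hEq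
              split_ifs at hEq with hu1 hu2 hu2
              · rw [hu1, hu2]
              · exact absurd hEq (hne_tg 0 _)
              · exact absurd hEq.symm (hne_tg 0 _)
              · exact congrArg Subtype.val (hg_inj hEq)
            have hgb : g b = liftFun g (t 0) b.1 := by rw [liftFun, dif_neg b.2]
            rw [hPsupp]
            have hcm : (q'.support.map (liftFun g (t 0))).count (g b) = 1 := by
              rw [hgb, List.count_map_of_injective _ _ hFinj]
              exact hcount' b.1 b.2
            simp [List.count_cons, List.count_append, hcm, hne_tg i b, hne_tg j b,
              hne_tg k b, (hne_tg i b).symm, (hne_tg j b).symm, (hne_tg k b).symm]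
        have hPnodup : Pbig.support.Nodup :=
          List.nodup_iff_count_le_one.2 (fun w => le_of_eq (hcnt w))
        have hPpath : Pbig.IsPath := IsPath.mk' hPnodup
        have hPedges : Pbig.edges = s(t i, g ⟨x, hx⟩) :: (Q.edges ++ [s(g ⟨y, hy⟩, t j), s(t j, t k)]) := by
          rw [hPbig, Walk.edges_cons, Walk.edges_append, hR]
          simp
        have hnotedge : s(t k, t i) ∉ Pbig.edges := by
          rw [hPedges]
          intro hmem
          rcases List.mem_cons.1 hmem with hEq | hmem2
          · rw [Sym2.eq_iff] at hEq
            rcases hEq with ⟨hc, _⟩ | ⟨hc, _⟩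
            · exact hki (ht_inj hc)
            · exact hne_tg k ⟨x, hx⟩ hc
          · rcases List.mem_append.1 hmem2 with hmem3 | hmem4
            · obtain ⟨a', b', hEq⟩ := hQe _ hmem3
              rw [Sym2.eq_iff] at hEq
              rcases hEq with ⟨hc, _⟩ | ⟨hc, _⟩
              · exact hne_tg k a' hc
              · exact hne_tg k b' hc
            · rcases List.mem_cons.1 hmem4 with hEq | hmem5
              · rw [Sym2.eq_iff] at hEq
                rcases hEq with ⟨hc, _⟩ | ⟨_, hc⟩
                · exact hne_tg k ⟨y, hy⟩ hc
                · exact hne_tg i ⟨y, hy⟩ hc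
              · rcases List.mem_cons.1 hmem5 with hEq | hmem6
                · rw [Sym2.eq_iff] at hEq
                  rcases hEq with ⟨hc, _⟩ | ⟨_, hc⟩
                  · exact hkj (ht_inj hc)
                  · exact hij (ht_inj hc)
                · simp at hmem6
        refine ⟨t k, Walk.cons h0 Pbig, ?_⟩
        rw [isHamiltonianCycle_iff_isCycle_and_support_count_tail_eq_one]
        constructor
        · rw [cons_isCycle_iff]
          exact ⟨hPpath, hnotedge⟩
        · intro w
          rw [Walk.support_cons, List.tail_cons]
          exact hcnt w

end Aux

theorem klee_isHamiltonian {V : Type} [Fintype V] (G : SimpleGraph V) (hG : IsKlee G) :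
    G.IsHamiltonian := fun _ => klee_aux G hG
end

section
/- The proper 3-edge-colouring of a Klee-graph is unique up to permutation of the colours; equivalently, the edge set of a Klee-graph admits a unique partition into three pairwise disjoint perfect matchings. -/
open SimpleGraph
open scoped Classical

section KleeAux

open SimpleGraph

lemma pm_mem_edge {V : Type} {G : SimpleGraph V} {M : Set (Sym2 V)} (hM : M ⊆ G.edgeSet)
    {e : Sym2 V} {a : V} (he : e ∈ M) (ha : a ∈ e) : ∃ b, e = s(a, b) ∧ G.Adj a b := by
  obtain ⟨b, rfl⟩ := Sym2.mem_iff_exists.mp ha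
  exact ⟨b, rfl, (G.mem_edgeSet).mp (hM he)⟩

lemma pm_uniq {V : Type} {G : SimpleGraph V} {M : Set (Sym2 V)} (hM : IsPerfectMatchingSet G M)
    {e₁ e₂ : Sym2 V} {a : V} (h1 : e₁ ∈ M) (h2 : e₂ ∈ M) (ha1 : a ∈ e₁) (ha2 : a ∈ e₂) :
    e₁ = e₂ := by
  obtain ⟨e, _, hu⟩ := hM.2 a
  rw [hu e₁ ⟨h1, ha1⟩, hu e₂ ⟨h2, ha2⟩]

lemma pm_ne_of_disjoint {V : Type} {G : SimpleGraph V} {M M' : Set (Sym2 V)}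
    (hM : IsPerfectMatchingSet G M) (hd : Disjoint M M') (x : V) : M ≠ M' := by
  obtain ⟨e, ⟨heM, _⟩, _⟩ := hM.2 x
  intro h
  exact Set.disjoint_left.mp hd heM (h ▸ heM)

lemma triple_set_eq {α : Type*} {x1 x2 x3 y1 y2 y3 : α}
    (h12 : x1 ≠ x2) (h13 : x1 ≠ x3) (h23 : x2 ≠ x3)
    (h1 : x1 = y1 ∨ x1 = y2 ∨ x1 = y3)
    (h2 : x2 = y1 ∨ x2 = y2 ∨ x2 = y3)
    (h3 : x3 = y1 ∨ x3 = y2 ∨ x3 = y3) :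
    ({x1, x2, x3} : Set α) = {y1, y2, y3} := by
  rcases h1 with rfl | rfl | rfl <;> rcases h2 with rfl | rfl | rfl <;>
    rcases h3 with rfl | rfl | rfl <;>
    first
      | exact absurd rfl h12
      | exact absurd rfl h13
      | exact absurd rfl h23
      | rfl
      | (ext z; simp only [Set.mem_insert_iff, Set.mem_singleton_iff]; tauto)

lemma K4_pm {V : Type} {G : SimpleGraph V} (h : ∀ a b : V, G.Adj a b ↔ a ≠ b)
    {x y z w : V}
    (hall : ∀ u : V, u = x ∨ u = y ∨ u = z ∨ u = w)
    (hxy : x ≠ y) (hxz : x ≠ z) (hxw : x ≠ w) (hyz : y ≠ z) (hyw : y ≠ w) (hzw : z ≠ w)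
    {M : Set (Sym2 V)} (hM : IsPerfectMatchingSet G M) (hxyM : s(x, y) ∈ M) :
    M = {s(x, y), s(z, w)} := by
  have hzwM : s(z, w) ∈ M := by
    obtain ⟨e, ⟨heM, hze⟩, _⟩ := hM.2 z
    obtain ⟨u, rfl, hadj⟩ := pm_mem_edge hM.1 heM hze
    have hu : u = w := by
      rcases hall u with hu | hu | hu | hu
      · have := pm_uniq hM heM hxyM (by rw [hu]; exact Sym2.mem_mk_right z x)
          (Sym2.mem_mk_left x y)
        rw [Sym2.eq_iff] at this
        rcases this with ⟨h1, _⟩ | ⟨h1, _⟩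
        · exact absurd h1.symm hxz
        · exact absurd h1.symm hyz
      · have := pm_uniq hM heM hxyM (by rw [hu]; exact Sym2.mem_mk_right z y)
          (Sym2.mem_mk_right x y)
        rw [Sym2.eq_iff] at this
        rcases this with ⟨h1, _⟩ | ⟨h1, _⟩
        · exact absurd h1.symm hxz
        · exact absurd h1.symm hyz
      · exact absurd hu.symm ((h z u).mp hadj)
      · exact hu
    rwa [hu] at heM
  ext e
  simp only [Set.mem_insert_iff, Set.mem_singleton_iff]
  constructor
  · intro heM
    obtain ⟨a, ha⟩ : ∃ a, a ∈ e := ⟨e.out.1, Sym2.out_fst_mem e⟩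
    rcases hall a with rfl | rfl | rfl | rfl
    · exact Or.inl (pm_uniq hM heM hxyM ha (Sym2.mem_mk_left _ _))
    · exact Or.inl (pm_uniq hM heM hxyM ha (Sym2.mem_mk_right _ _))
    · exact Or.inr (pm_uniq hM heM hzwM ha (Sym2.mem_mk_left _ _))
    · exact Or.inr (pm_uniq hM heM hzwM ha (Sym2.mem_mk_right _ _))
  · rintro (rfl | rfl) <;> assumption

lemma K4_pm_classify {V : Type} (G : SimpleGraph V) (e : V ≃ Fin 4)
    (h : ∀ a b : V, G.Adj a b ↔ a ≠ b)
    {M : Set (Sym2 V)} (hM : IsPerfectMatchingSet G M) :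
    M = {s(e.symm 0, e.symm 1), s(e.symm 2, e.symm 3)} ∨
    M = {s(e.symm 0, e.symm 2), s(e.symm 1, e.symm 3)} ∨
    M = {s(e.symm 0, e.symm 3), s(e.symm 1, e.symm 2)} := by
  have hinj : Function.Injective e.symm := e.symm.injective
  have h4 : ∀ i : Fin 4, i = 0 ∨ i = 1 ∨ i = 2 ∨ i = 3 := by decide
  have hall : ∀ u : V, u = e.symm 0 ∨ u = e.symm 1 ∨ u = e.symm 2 ∨ u = e.symm 3 := by
    intro u
    have hu : u = e.symm (e u) := (e.symm_apply_apply u).symm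
    rcases h4 (e u) with h' | h' | h' | h' <;> rw [h'] at hu <;> tauto
  have hne : ∀ i j : Fin 4, i ≠ j → e.symm i ≠ e.symm j := fun i j hij => fun hh => hij (hinj hh)
  obtain ⟨E, ⟨hEM, h0E⟩, _⟩ := hM.2 (e.symm 0)
  obtain ⟨c, rfl, hadj⟩ := pm_mem_edge hM.1 hEM h0E
  have hc0 : c ≠ e.symm 0 := fun hh => (h _ _).mp hadj hh.symm
  rcases hall c with rfl | rfl | rfl | rfl
  · exact absurd rfl hc0
  · exact Or.inl (K4_pm h hall (hne 0 1 (by decide)) (hne 0 2 (by decide)) (hne 0 3 (by decide))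
      (hne 1 2 (by decide)) (hne 1 3 (by decide)) (hne 2 3 (by decide)) hM hEM)
  · refine Or.inr (Or.inl (K4_pm h (fun u => by rcases hall u with h'|h'|h'|h' <;> tauto)
      (hne 0 2 (by decide)) (hne 0 1 (by decide)) (hne 0 3 (by decide))
      (hne 2 1 (by decide)) (hne 2 3 (by decide)) (hne 1 3 (by decide)) hM hEM))
  · refine Or.inr (Or.inr (K4_pm h (fun u => by rcases hall u with h'|h'|h'|h' <;> tauto)
      (hne 0 3 (by decide)) (hne 0 1 (by decide)) (hne 0 2 (by decide))
      (hne 3 1 (by decide)) (hne 3 2 (by decide)) (hne 1 2 (by decide)) hM hEM))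

end KleeAux


section KleeExpand

open SimpleGraph

def contractPM {V W : Type} (v : V) (t : Fin 3 → W) (g : {u : V // u ≠ v} → W)
    (σ : Fin 3 → {u : V // u ≠ v}) (M : Set (Sym2 W)) : Set (Sym2 V) :=
  {e | (∃ a b : {u : V // u ≠ v}, e = s(a.1, b.1) ∧ s(g a, g b) ∈ M) ∨
       (∃ i : Fin 3, e = s(v, (σ i).1) ∧ s(t i, g (σ i)) ∈ M)}

lemma mem_contractPM {V W : Type} {v : V} {t : Fin 3 → W} {g : {u : V // u ≠ v} → W}
    {σ : Fin 3 → {u : V // u ≠ v}} {M : Set (Sym2 W)} {e : Sym2 V} :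
    e ∈ contractPM v t g σ M ↔
      (∃ a b : {u : V // u ≠ v}, e = s(a.1, b.1) ∧ s(g a, g b) ∈ M) ∨
      (∃ i : Fin 3, e = s(v, (σ i).1) ∧ s(t i, g (σ i)) ∈ M) := Iff.rfl

lemma expand_step {V W : Type} (G : SimpleGraph V) (H : SimpleGraph W)
    (hexp : IsTriangleExpansion G H)
    (IH : ∀ P1 P2 P3 Q1 Q2 Q3 : Set (Sym2 V),
      IsPerfectMatchingSet G P1 → IsPerfectMatchingSet G P2 → IsPerfectMatchingSet G P3 →
      Disjoint P1 P2 → Disjoint P1 P3 → Disjoint P2 P3 → P1 ∪ P2 ∪ P3 = G.edgeSet →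
      IsPerfectMatchingSet G Q1 → IsPerfectMatchingSet G Q2 → IsPerfectMatchingSet G Q3 →
      Disjoint Q1 Q2 → Disjoint Q1 Q3 → Disjoint Q2 Q3 → Q1 ∪ Q2 ∪ Q3 = G.edgeSet →
      ({P1, P2, P3} : Set (Set (Sym2 V))) = {Q1, Q2, Q3})
    (M1 M2 M3 N1 N2 N3 : Set (Sym2 W))
    (hM1 : IsPerfectMatchingSet H M1) (hM2 : IsPerfectMatchingSet H M2)
    (hM3 : IsPerfectMatchingSet H M3)
    (hM12 : Disjoint M1 M2) (hM13 : Disjoint M1 M3) (hM23 : Disjoint M2 M3)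
    (hMU : M1 ∪ M2 ∪ M3 = H.edgeSet)
    (hN1 : IsPerfectMatchingSet H N1) (hN2 : IsPerfectMatchingSet H N2)
    (hN3 : IsPerfectMatchingSet H N3)
    (hN12 : Disjoint N1 N2) (hN13 : Disjoint N1 N3) (hN23 : Disjoint N2 N3)
    (hNU : N1 ∪ N2 ∪ N3 = H.edgeSet) :
    ({M1, M2, M3} : Set (Set (Sym2 W))) = {N1, N2, N3} := by
  obtain ⟨v, t, g, σ, ht, hg, hdis, hcov, hσi, hσa, hσr, hT, hGg, htg⟩ := hexp
  have htgne : ∀ (i : Fin 3) (a : {u : V // u ≠ v}), t i ≠ g a := by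
    intro i a hh
    have : t i ∈ Set.range t ∩ Set.range g := ⟨⟨i, rfl⟩, ⟨a, hh.symm⟩⟩
    rw [hdis] at this
    exact this
  have hcov' : ∀ w : W, (∃ i, w = t i) ∨ (∃ a, w = g a) := by
    intro w
    have hw : w ∈ Set.range t ∪ Set.range g := by rw [hcov]; trivial
    rcases hw with ⟨i, hi⟩ | ⟨a, ha⟩
    · exact Or.inl ⟨i, hi.symm⟩
    · exact Or.inr ⟨a, ha.symm⟩
  have fin3_third : ∀ i j : Fin 3, i ≠ j →
      ∃ m : Fin 3, m ≠ i ∧ m ≠ j ∧ ∀ x : Fin 3, x = i ∨ x = j ∨ x = m := by decide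
  have hts : ∀ i j k : Fin 3, s(t i, t j) ≠ s(t k, g (σ k)) := by
    intro i j k hh
    rw [Sym2.eq_iff] at hh
    rcases hh with ⟨_, h2⟩ | ⟨h1, _⟩
    · exact htgne j (σ k) h2
    · exact htgne i (σ k) h1
  have htt : ∀ i j k l : Fin 3, s(t i, t j) = s(t k, t l) →
      (i = k ∧ j = l) ∨ (i = l ∧ j = k) := by
    intro i j k l hh
    rw [Sym2.eq_iff] at hh
    rcases hh with ⟨h1, h2⟩ | ⟨h1, h2⟩
    · exact Or.inl ⟨ht h1, ht h2⟩
    · exact Or.inr ⟨ht h1, ht h2⟩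
  have hclass : ∀ e ∈ H.edgeSet,
      (∃ i j : Fin 3, i ≠ j ∧ e = s(t i, t j)) ∨
      (∃ i, e = s(t i, g (σ i))) ∨
      (∃ a b, G.Adj a.1 b.1 ∧ e = s(g a, g b)) := by
    intro e he
    obtain ⟨x, hx⟩ : ∃ x, x ∈ e := ⟨e.out.1, Sym2.out_fst_mem e⟩
    obtain ⟨y, rfl, hadj⟩ := pm_mem_edge (subset_refl H.edgeSet) he hx
    rcases hcov' x with ⟨i, rfl⟩ | ⟨a, rfl⟩ <;> rcases hcov' y with ⟨j, rfl⟩ | ⟨b, rfl⟩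
    · exact Or.inl ⟨i, j, (hT i j).mp hadj, rfl⟩
    · have hb : b = σ i := (htg i b).mp hadj
      subst hb
      exact Or.inr (Or.inl ⟨i, rfl⟩)
    · have ha : a = σ j := (htg j a).mp hadj.symm
      subst ha
      exact Or.inr (Or.inl ⟨j, Sym2.eq_swap⟩)
    · exact Or.inr (Or.inr ⟨a, b, (hGg a b).mp hadj, rfl⟩)
  have hspoke_ex : ∀ M : Set (Sym2 W), IsPerfectMatchingSet H M →
      ∃ i, s(t i, g (σ i)) ∈ M := by
    intro M hM
    by_contra hno
    push_neg at hno
    obtain ⟨e, ⟨heM, h0e⟩, _⟩ := hM.2 (t 0)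
    obtain ⟨x, rfl, hadj⟩ := pm_mem_edge hM.1 heM h0e
    rcases hcov' x with ⟨j, rfl⟩ | ⟨a, rfl⟩
    · have hj0 : (0 : Fin 3) ≠ j := (hT 0 j).mp hadj
      obtain ⟨m, hm0, hmj, hmx⟩ := fin3_third 0 j hj0
      obtain ⟨e', ⟨heM', hme⟩, _⟩ := hM.2 (t m)
      obtain ⟨x', rfl, hadj'⟩ := pm_mem_edge hM.1 heM' hme
      rcases hcov' x' with ⟨k, rfl⟩ | ⟨a, rfl⟩
      · have hmk : m ≠ k := (hT m k).mp hadj'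
        rcases hmx k with hk | hk | hk
        · subst hk
          have hequ := pm_uniq hM heM heM' (Sym2.mem_mk_left _ _) (Sym2.mem_mk_right _ _)
          rcases htt _ _ _ _ hequ with ⟨h1, _⟩ | ⟨_, h2⟩
          · exact hm0 h1.symm
          · exact hmj h2.symm
        · subst hk
          have hequ := pm_uniq hM heM heM' (Sym2.mem_mk_right _ _) (Sym2.mem_mk_right _ _)
          rcases htt _ _ _ _ hequ with ⟨h1, _⟩ | ⟨h1, _⟩
          · exact hm0 h1.symm
          · exact hj0 h1
        · subst hk
          exact hmk rfl
      · have ha : a = σ m := (htg m a).mp hadj'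
        subst ha
        exact hno m heM'
    · have ha : a = σ 0 := (htg 0 a).mp hadj
      subst ha
      exact hno 0 heM
  have hspoke_uniq : ∀ M M' : Set (Sym2 W), IsPerfectMatchingSet H M →
      IsPerfectMatchingSet H M' → Disjoint M M' →
      ∀ i j, s(t i, g (σ i)) ∈ M → s(t j, g (σ j)) ∈ M → i = j := by
    intro M M' hM hM' hd i j hi hj
    by_contra hij
    obtain ⟨m, hmi, hmj, hmx⟩ := fin3_third i j hij
    have hsm : s(t m, g (σ m)) ∈ M := by
      obtain ⟨e, ⟨heM, hme⟩, _⟩ := hM.2 (t m)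
      obtain ⟨x, rfl, hadj⟩ := pm_mem_edge hM.1 heM hme
      rcases hcov' x with ⟨k, rfl⟩ | ⟨a, rfl⟩
      · exfalso
        rcases hmx k with hk | hk | hk
        · rw [hk] at heM
          exact hts m i i (pm_uniq hM heM hi (Sym2.mem_mk_right _ _) (Sym2.mem_mk_left _ _))
        · rw [hk] at heM
          exact hts m j j (pm_uniq hM heM hj (Sym2.mem_mk_right _ _) (Sym2.mem_mk_left _ _))
        · rw [hk] at hadj
          exact (hT m m).mp hadj rfl
      · have ha : a = σ m := (htg m a).mp hadj
        subst ha
        exact heM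
    obtain ⟨k, hk⟩ := hspoke_ex M' hM'
    have hkM : s(t k, g (σ k)) ∈ M := by
      rcases hmx k with hk' | hk' | hk' <;> subst hk' <;> assumption
    exact Set.disjoint_left.mp hd hkM hk
  have htri : ∀ M : Set (Sym2 W), IsPerfectMatchingSet H M → ∀ i j : Fin 3, i ≠ j →
      (s(t i, t j) ∈ M ↔ s(t i, g (σ i)) ∉ M ∧ s(t j, g (σ j)) ∉ M) := by
    intro M hM i j hij
    constructor
    · intro hm
      constructor
      · intro hs
        exact hts i j i (pm_uniq hM hm hs (Sym2.mem_mk_left _ _) (Sym2.mem_mk_left _ _))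
      · intro hs
        exact hts i j j (pm_uniq hM hm hs (Sym2.mem_mk_right _ _) (Sym2.mem_mk_left _ _))
    · rintro ⟨hi, hj⟩
      obtain ⟨m, hmi, hmj, hmx⟩ := fin3_third i j hij
      obtain ⟨e, ⟨heM, hie⟩, _⟩ := hM.2 (t i)
      obtain ⟨x, rfl, hadj⟩ := pm_mem_edge hM.1 heM hie
      rcases hcov' x with ⟨k, rfl⟩ | ⟨a, rfl⟩
      · have hik : i ≠ k := (hT i k).mp hadj
        rcases hmx k with hk | hk | hk
        · subst hk
          exact absurd rfl hik
        · subst hk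
          exact heM
        · subst hk
          exfalso
          obtain ⟨e', ⟨heM', hje⟩, _⟩ := hM.2 (t j)
          obtain ⟨y, rfl, hadj'⟩ := pm_mem_edge hM.1 heM' hje
          rcases hcov' y with ⟨l, rfl⟩ | ⟨b, rfl⟩
          · have hjl : j ≠ l := (hT j l).mp hadj'
            rcases hmx l with hl | hl | hl
            · subst hl
              have hequ := pm_uniq hM heM heM' (Sym2.mem_mk_left _ _) (Sym2.mem_mk_right _ _)
              rcases htt _ _ _ _ hequ with ⟨h1, _⟩ | ⟨_, h2⟩
              · exact hij h1
              · exact hmj h2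
            · subst hl
              exact hjl rfl
            · subst hl
              have hequ := pm_uniq hM heM heM' (Sym2.mem_mk_right _ _) (Sym2.mem_mk_right _ _)
              rcases htt _ _ _ _ hequ with ⟨h1, _⟩ | ⟨h1, _⟩
              · exact hij h1
              · exact hmi h1.symm
          · have hb : b = σ j := (htg j b).mp hadj'
            subst hb
            exact hj heM'
      · have ha : a = σ i := (htg i a).mp hadj
        subst ha
        exact absurd heM hi
  have hE1 : ∀ (M : Set (Sym2 W)) (i : Fin 3),
      s(v, (σ i).1) ∈ contractPM v t g σ M → s(t i, g (σ i)) ∈ M := by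
    intro M i hh
    rw [mem_contractPM] at hh
    rcases hh with ⟨a, b, he, hm⟩ | ⟨j, he, hm⟩
    · exfalso
      rw [Sym2.eq_iff] at he
      rcases he with ⟨h1, _⟩ | ⟨h1, _⟩
      · exact a.2 h1.symm
      · exact b.2 h1.symm
    · rw [Sym2.eq_iff] at he
      rcases he with ⟨_, h2⟩ | ⟨h1, _⟩
      · have hij : i = j := hσi (Subtype.ext h2)
        rw [hij]
        exact hm
      · exact absurd h1.symm (σ j).2
  have hE2 : ∀ (M : Set (Sym2 W)) (a b : {u : V // u ≠ v}),
      s(a.1, b.1) ∈ contractPM v t g σ M → s(g a, g b) ∈ M := by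
    intro M a b hh
    rw [mem_contractPM] at hh
    rcases hh with ⟨a', b', he, hm⟩ | ⟨j, he, hm⟩
    · rw [Sym2.eq_iff] at he
      rcases he with ⟨h1, h2⟩ | ⟨h1, h2⟩
      · rw [Subtype.ext h1, Subtype.ext h2]
        exact hm
      · rw [Subtype.ext h1, Subtype.ext h2, Sym2.eq_swap]
        exact hm
    · exfalso
      rw [Sym2.eq_iff] at he
      rcases he with ⟨h1, _⟩ | ⟨_, h2⟩
      · exact a.2 h1
      · exact b.2 h2
  have hCpm : ∀ M M' : Set (Sym2 W), IsPerfectMatchingSet H M → IsPerfectMatchingSet H M' →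
      Disjoint M M' → IsPerfectMatchingSet G (contractPM v t g σ M) := by
    intro M M' hM hM' hd
    constructor
    · intro e he
      rw [mem_contractPM] at he
      rcases he with ⟨a, b, rfl, hm⟩ | ⟨i, rfl, hm⟩
      · exact G.mem_edgeSet.mpr ((hGg a b).mp (H.mem_edgeSet.mp (hM.1 hm)))
      · exact G.mem_edgeSet.mpr (hσa i)
    · intro u
      by_cases hu : u = v
      · subst hu
        obtain ⟨i, hi⟩ := hspoke_ex M hM
        refine ⟨s(u, (σ i).1), ⟨mem_contractPM.mpr (Or.inr ⟨i, rfl, hi⟩),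
          Sym2.mem_mk_left _ _⟩, ?_⟩
        rintro e ⟨he, hve⟩
        rw [mem_contractPM] at he
        rcases he with ⟨a, b, hee, hm⟩ | ⟨j, hee, hm⟩
        · exfalso
          subst hee
          rw [Sym2.mem_iff] at hve
          rcases hve with h1 | h1
          · exact a.2 h1.symm
          · exact b.2 h1.symm
        · subst hee
          have hji : j = i := hspoke_uniq M M' hM hM' hd j i hm hi
          rw [hji]
      · obtain ⟨E, ⟨hEM, hgaE⟩, _⟩ := hM.2 (g ⟨u, hu⟩)
        rcases hclass E (hM.1 hEM) with ⟨i, j, hij, hE⟩ | ⟨i, hE⟩ | ⟨b, c, hbc, hE⟩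
        · exfalso
          subst hE
          rw [Sym2.mem_iff] at hgaE
          rcases hgaE with h1 | h1
          · exact htgne i _ h1.symm
          · exact htgne j _ h1.symm
        · subst hE
          have ha : (⟨u, hu⟩ : {x : V // x ≠ v}) = σ i := by
            rw [Sym2.mem_iff] at hgaE
            rcases hgaE with h1 | h1
            · exact absurd h1.symm (htgne i _)
            · exact hg h1
          refine ⟨s(v, u), ⟨mem_contractPM.mpr (Or.inr ⟨i, by rw [← ha], hEM⟩),
            Sym2.mem_mk_right _ _⟩, ?_⟩
          rintro e ⟨he, hue⟩
          rw [mem_contractPM] at he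
          rcases he with ⟨a', b', hee, hm⟩ | ⟨j, hee, hm⟩
          · exfalso
            subst hee
            rw [Sym2.mem_iff] at hue
            have hmem : g ⟨u, hu⟩ ∈ s(g a', g b') := by
              rcases hue with h1 | h1
              · rw [Sym2.mem_iff]; left; congr 1; exact Subtype.ext h1
              · rw [Sym2.mem_iff]; right; congr 1; exact Subtype.ext h1
            have hequ := pm_uniq hM hm hEM hmem hgaE
            rw [Sym2.eq_iff] at hequ
            rcases hequ with ⟨h1, _⟩ | ⟨_, h2⟩
            · exact htgne i a' h1.symm
            · exact htgne i b' h2.symm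
          · subst hee
            rw [Sym2.mem_iff] at hue
            rcases hue with h1 | h1
            · exact absurd h1 hu
            · rw [← h1]
        · subst hE
          have habc : (⟨u, hu⟩ : {x : V // x ≠ v}) = b ∨ (⟨u, hu⟩ : {x : V // x ≠ v}) = c := by
            rw [Sym2.mem_iff] at hgaE
            rcases hgaE with h1 | h1
            · exact Or.inl (hg h1)
            · exact Or.inr (hg h1)
          have humem : u ∈ s(b.1, c.1) := by
            rw [Sym2.mem_iff]
            rcases habc with h1 | h1
            · left; rw [← h1]
            · right; rw [← h1]
          have hgmem : g ⟨u, hu⟩ ∈ s(g b, g c) := by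
            rcases habc with h1 | h1
            · rw [h1]; exact Sym2.mem_mk_left _ _
            · rw [h1]; exact Sym2.mem_mk_right _ _
          refine ⟨s(b.1, c.1), ⟨mem_contractPM.mpr (Or.inl ⟨b, c, rfl, hEM⟩), humem⟩, ?_⟩
          rintro e ⟨he, hue⟩
          rw [mem_contractPM] at he
          rcases he with ⟨a', b', hee, hm⟩ | ⟨j, hee, hm⟩
          · subst hee
            rw [Sym2.mem_iff] at hue
            have hmem : g ⟨u, hu⟩ ∈ s(g a', g b') := by
              rcases hue with h1 | h1
              · rw [Sym2.mem_iff]; left; congr 1; exact Subtype.ext h1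
              · rw [Sym2.mem_iff]; right; congr 1; exact Subtype.ext h1
            have hequ := pm_uniq hM hm hEM hmem hgmem
            rw [Sym2.eq_iff] at hequ
            rcases hequ with ⟨h1, h2⟩ | ⟨h1, h2⟩
            · rw [hg h1, hg h2]
            · rw [hg h1, hg h2]
              exact Sym2.eq_swap
          · exfalso
            subst hee
            rw [Sym2.mem_iff] at hue
            rcases hue with h1 | h1
            · exact hu h1
            · have haj : (⟨u, hu⟩ : {x : V // x ≠ v}) = σ j := Subtype.ext h1
              have hmem : g ⟨u, hu⟩ ∈ s(t j, g (σ j)) := by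
                rw [haj]
                exact Sym2.mem_mk_right _ _
              have hequ := pm_uniq hM hm hEM hmem hgmem
              rw [Sym2.eq_iff] at hequ
              rcases hequ with ⟨h2, _⟩ | ⟨h2, _⟩
              · exact htgne j b h2
              · exact htgne j c h2
  have hCdisj : ∀ M M' : Set (Sym2 W), Disjoint M M' →
      Disjoint (contractPM v t g σ M) (contractPM v t g σ M') := by
    intro M M' hd
    rw [Set.disjoint_left]
    intro e he he'
    rw [mem_contractPM] at he
    rcases he with ⟨a, b, rfl, hm⟩ | ⟨i, rfl, hm⟩
    · exact Set.disjoint_left.mp hd hm (hE2 M' a b he')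
    · exact Set.disjoint_left.mp hd hm (hE1 M' i he')
  have hCsub : ∀ M : Set (Sym2 W), M ⊆ H.edgeSet → contractPM v t g σ M ⊆ G.edgeSet := by
    intro M hMe e he
    rw [mem_contractPM] at he
    rcases he with ⟨a, b, rfl, hm⟩ | ⟨i, rfl, hm⟩
    · exact G.mem_edgeSet.mpr ((hGg a b).mp (H.mem_edgeSet.mp (hMe hm)))
    · exact G.mem_edgeSet.mpr (hσa i)
  have hCU : ∀ M M' M'' : Set (Sym2 W), M ∪ M' ∪ M'' = H.edgeSet →
      M ⊆ H.edgeSet → M' ⊆ H.edgeSet → M'' ⊆ H.edgeSet →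
      contractPM v t g σ M ∪ contractPM v t g σ M' ∪ contractPM v t g σ M'' = G.edgeSet := by
    intro M M' M'' hU hs hs' hs''
    apply Set.Subset.antisymm
    · intro e he
      rcases he with (h1 | h1) | h1
      · exact hCsub M hs h1
      · exact hCsub M' hs' h1
      · exact hCsub M'' hs'' h1
    · intro e he
      obtain ⟨x, hx⟩ : ∃ x, x ∈ e := ⟨e.out.1, Sym2.out_fst_mem e⟩
      obtain ⟨y, rfl, hadj⟩ := pm_mem_edge (subset_refl G.edgeSet) he hx
      have place : ∀ eH : Sym2 W, eH ∈ H.edgeSet →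
          (∀ MM : Set (Sym2 W), eH ∈ MM → s(x, y) ∈ contractPM v t g σ MM) →
          s(x, y) ∈ contractPM v t g σ M ∪ contractPM v t g σ M' ∪ contractPM v t g σ M'' := by
        intro eH heH hplace
        rw [← hU] at heH
        rcases heH with (h1 | h1) | h1
        · exact Or.inl (Or.inl (hplace M h1))
        · exact Or.inl (Or.inr (hplace M' h1))
        · exact Or.inr (hplace M'' h1)
      by_cases hxv : x = v
      · have hyv : y ≠ v := fun hy => hadj.ne (hxv.trans hy.symm)
        obtain ⟨i, hi⟩ := hσr ⟨y, hyv⟩ (hxv ▸ hadj)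
        refine place (s(t i, g (σ i))) (H.mem_edgeSet.mpr ((htg i (σ i)).mpr rfl)) ?_
        intro MM hMM
        exact mem_contractPM.mpr (Or.inr ⟨i, by rw [hxv, hi], hMM⟩)
      · by_cases hyv : y = v
        · obtain ⟨i, hi⟩ := hσr ⟨x, hxv⟩ (hyv ▸ hadj.symm)
          refine place (s(t i, g (σ i))) (H.mem_edgeSet.mpr ((htg i (σ i)).mpr rfl)) ?_
          intro MM hMM
          refine mem_contractPM.mpr (Or.inr ⟨i, ?_, hMM⟩)
          rw [hyv, hi]
          exact Sym2.eq_swap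
        · refine place (s(g ⟨x, hxv⟩, g ⟨y, hyv⟩)) (H.mem_edgeSet.mpr ((hGg _ _).mpr hadj)) ?_
          intro MM hMM
          exact mem_contractPM.mpr (Or.inl ⟨⟨x, hxv⟩, ⟨y, hyv⟩, rfl, hMM⟩)
  have hCrec : ∀ M N : Set (Sym2 W), IsPerfectMatchingSet H M → IsPerfectMatchingSet H N →
      contractPM v t g σ M = contractPM v t g σ N → M ⊆ N := by
    intro M N hM hN hc e he
    rcases hclass e (hM.1 he) with ⟨i, j, hij, hE⟩ | ⟨i, hE⟩ | ⟨a, b, hab, hE⟩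
    · subst hE
      have hm := (htri M hM i j hij).mp he
      refine (htri N hN i j hij).mpr ⟨?_, ?_⟩
      · intro hs
        have h1 : s(v, (σ i).1) ∈ contractPM v t g σ M := by
          rw [hc]
          exact mem_contractPM.mpr (Or.inr ⟨i, rfl, hs⟩)
        exact hm.1 (hE1 M i h1)
      · intro hs
        have h1 : s(v, (σ j).1) ∈ contractPM v t g σ M := by
          rw [hc]
          exact mem_contractPM.mpr (Or.inr ⟨j, rfl, hs⟩)
        exact hm.2 (hE1 M j h1)
    · subst hE
      have h1 : s(v, (σ i).1) ∈ contractPM v t g σ N := by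
        rw [← hc]
        exact mem_contractPM.mpr (Or.inr ⟨i, rfl, he⟩)
      exact hE1 N i h1
    · subst hE
      have h1 : s(a.1, b.1) ∈ contractPM v t g σ N := by
        rw [← hc]
        exact mem_contractPM.mpr (Or.inl ⟨a, b, rfl, he⟩)
      exact hE2 N a b h1
  have hrec : ∀ M N : Set (Sym2 W), IsPerfectMatchingSet H M → IsPerfectMatchingSet H N →
      contractPM v t g σ M = contractPM v t g σ N → M = N := fun M N hM hN hc =>
    Set.Subset.antisymm (hCrec M N hM hN hc) (hCrec N M hN hM hc.symm)
  have hmain := IH (contractPM v t g σ M1) (contractPM v t g σ M2) (contractPM v t g σ M3)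
    (contractPM v t g σ N1) (contractPM v t g σ N2) (contractPM v t g σ N3)
    (hCpm M1 M2 hM1 hM2 hM12) (hCpm M2 M1 hM2 hM1 hM12.symm) (hCpm M3 M1 hM3 hM1 hM13.symm)
    (hCdisj M1 M2 hM12) (hCdisj M1 M3 hM13) (hCdisj M2 M3 hM23)
    (hCU M1 M2 M3 hMU hM1.1 hM2.1 hM3.1)
    (hCpm N1 N2 hN1 hN2 hN12) (hCpm N2 N1 hN2 hN1 hN12.symm) (hCpm N3 N1 hN3 hN1 hN13.symm)
    (hCdisj N1 N2 hN12) (hCdisj N1 N3 hN13) (hCdisj N2 N3 hN23)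
    (hCU N1 N2 N3 hNU hN1.1 hN2.1 hN3.1)
  have hget : ∀ M : Set (Sym2 W), IsPerfectMatchingSet H M →
      contractPM v t g σ M ∈ ({contractPM v t g σ N1, contractPM v t g σ N2,
        contractPM v t g σ N3} : Set (Set (Sym2 V))) → M = N1 ∨ M = N2 ∨ M = N3 := by
    intro M hM hmem
    simp only [Set.mem_insert_iff, Set.mem_singleton_iff] at hmem
    rcases hmem with h1 | h1 | h1
    · exact Or.inl (hrec M N1 hM hN1 h1)
    · exact Or.inr (Or.inl (hrec M N2 hM hN2 h1))
    · exact Or.inr (Or.inr (hrec M N3 hM hN3 h1))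
  refine triple_set_eq (pm_ne_of_disjoint hM1 hM12 (t 0)) (pm_ne_of_disjoint hM1 hM13 (t 0))
    (pm_ne_of_disjoint hM2 hM23 (t 0)) ?_ ?_ ?_
  · exact hget M1 hM1 (by rw [← hmain]; simp)
  · exact hget M2 hM2 (by rw [← hmain]; simp)
  · exact hget M3 hM3 (by rw [← hmain]; simp)

end KleeExpand

theorem klee_key {V : Type} {G : SimpleGraph V} (hG : IsKlee G) :
    ∀ M1 M2 M3 N1 N2 N3 : Set (Sym2 V),
      IsPerfectMatchingSet G M1 → IsPerfectMatchingSet G M2 → IsPerfectMatchingSet G M3 →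
      Disjoint M1 M2 → Disjoint M1 M3 → Disjoint M2 M3 → M1 ∪ M2 ∪ M3 = G.edgeSet →
      IsPerfectMatchingSet G N1 → IsPerfectMatchingSet G N2 → IsPerfectMatchingSet G N3 →
      Disjoint N1 N2 → Disjoint N1 N3 → Disjoint N2 N3 → N1 ∪ N2 ∪ N3 = G.edgeSet →
      ({M1, M2, M3} : Set (Set (Sym2 V))) = {N1, N2, N3} := by
  induction hG with
  | base G e h =>
    intro M1 M2 M3 N1 N2 N3 hM1 hM2 hM3 hM12 hM13 hM23 hMU hN1 hN2 hN3 hN12 hN13 hN23 hNU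
    have hA := triple_set_eq (pm_ne_of_disjoint hM1 hM12 (e.symm 0))
      (pm_ne_of_disjoint hM1 hM13 (e.symm 0)) (pm_ne_of_disjoint hM2 hM23 (e.symm 0))
      (K4_pm_classify G e h hM1) (K4_pm_classify G e h hM2) (K4_pm_classify G e h hM3)
    have hB := triple_set_eq (pm_ne_of_disjoint hN1 hN12 (e.symm 0))
      (pm_ne_of_disjoint hN1 hN13 (e.symm 0)) (pm_ne_of_disjoint hN2 hN23 (e.symm 0))
      (K4_pm_classify G e h hN1) (K4_pm_classify G e h hN2) (K4_pm_classify G e h hN3)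
    rw [hA, hB]
  | expand G H hG hexp IH =>
    intro M1 M2 M3 N1 N2 N3 hM1 hM2 hM3 hM12 hM13 hM23 hMU hN1 hN2 hN3 hN12 hN13 hN23 hNU
    exact expand_step G H hexp IH M1 M2 M3 N1 N2 N3 hM1 hM2 hM3 hM12 hM13 hM23 hMU
      hN1 hN2 hN3 hN12 hN13 hN23 hNU


theorem klee_unique_three_edge_colouring {V : Type} (G : SimpleGraph V) (hG : IsKlee G)
    (M1 M2 M3 N1 N2 N3 : Set (Sym2 V))
    (hM1 : IsPerfectMatchingSet G M1) (hM2 : IsPerfectMatchingSet G M2)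
    (hM3 : IsPerfectMatchingSet G M3)
    (hM12 : Disjoint M1 M2) (hM13 : Disjoint M1 M3) (hM23 : Disjoint M2 M3)
    (hMU : M1 ∪ M2 ∪ M3 = G.edgeSet)
    (hN1 : IsPerfectMatchingSet G N1) (hN2 : IsPerfectMatchingSet G N2)
    (hN3 : IsPerfectMatchingSet G N3)
    (hN12 : Disjoint N1 N2) (hN13 : Disjoint N1 N3) (hN23 : Disjoint N2 N3)
    (hNU : N1 ∪ N2 ∪ N3 = G.edgeSet) :
    ({M1, M2, M3} : Set (Set (Sym2 V))) = {N1, N2, N3} := by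
  exact klee_key hG M1 M2 M3 N1 N2 N3 hM1 hM2 hM3 hM12 hM13 hM23 hMU hN1 hN2 hN3 hN12 hN13 hN23 hNU
end

section
/- Every Klee-graph on at least 6 vertices has at least two triangles, and all of its triangles are pairwise vertex-disjoint. -/
open SimpleGraph
open scoped Classical

def GoodTri {V : Type} (G : SimpleGraph V) : Prop :=
  (∃ T1 T2 : Set V, IsTriangleSet G T1 ∧ IsTriangleSet G T2 ∧ T1 ≠ T2) ∧
  (∀ T1 T2 : Set V, IsTriangleSet G T1 → IsTriangleSet G T2 → T1 ≠ T2 →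
    Disjoint T1 T2)

lemma fin3_mem : ∀ m : Fin 3, m = 0 ∨ m = 1 ∨ m = 2 := by decide

lemma fin3_cover : ∀ i j k x : Fin 3, i ≠ j → i ≠ k → j ≠ k →
    x = i ∨ x = j ∨ x = k := by decide

lemma fin4_cover : ∀ x p q r u : Fin 4, p ≠ q → p ≠ r → q ≠ r →
    p ≠ x → q ≠ x → r ≠ x → u ≠ x → (u = p ∨ u = q ∨ u = r) := by decide

lemma fin4_shifts : ∀ x : Fin 4, x + 1 ≠ x + 2 ∧ x + 1 ≠ x + 3 ∧ x + 2 ≠ x + 3 ∧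
    x + 1 ≠ x ∧ x + 2 ≠ x ∧ x + 3 ≠ x := by decide

lemma expansion_good {V W : Type} (G : SimpleGraph V) (H : SimpleGraph W)
    (v : V) (t : Fin 3 → W) (g : {u : V // u ≠ v} → W) (σ : Fin 3 → {u : V // u ≠ v})
    (ht : Function.Injective t) (hg : Function.Injective g)
    (hdisj : Set.range t ∩ Set.range g = ∅)
    (hcover : Set.range t ∪ Set.range g = Set.univ)
    (hσ : Function.Injective σ)
    (htt : ∀ i j, H.Adj (t i) (t j) ↔ i ≠ j)
    (hgg : ∀ a b : {u : V // u ≠ v}, H.Adj (g a) (g b) ↔ G.Adj a.1 b.1)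
    (htg : ∀ i a, H.Adj (t i) (g a) ↔ a = σ i)
    (hE : ∃ S, IsTriangleSet G S ∧ v ∉ S)
    (hD : ∀ S1 S2 : Set V, IsTriangleSet G S1 → v ∉ S1 → IsTriangleSet G S2 → v ∉ S2 →
      S1 ≠ S2 → Disjoint S1 S2) :
    GoodTri H := by
  have hsep : ∀ i a, t i ≠ g a := by
    intro i a h
    have : g a ∈ Set.range t ∩ Set.range g := ⟨⟨i, h⟩, ⟨a, rfl⟩⟩
    rw [hdisj] at this
    exact this.elim
  have hnot : ∀ w : W, (∃ i, t i = w) ∨ (∃ a, g a = w) := by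
    intro w
    have : w ∈ Set.range t ∪ Set.range g := by rw [hcover]; trivial
    exact this
  -- classification of triangles of H
  have classify : ∀ T : Set W, IsTriangleSet H T →
      T = {t 0, t 1, t 2} ∨
      ∃ a b c : {u : V // u ≠ v}, T = {g a, g b, g c} ∧
        G.Adj a.1 b.1 ∧ G.Adj a.1 c.1 ∧ G.Adj b.1 c.1 := by
    rintro T ⟨x, y, z, rfl, hxy, hxz, hyz⟩
    rcases hnot x with ⟨i, rfl⟩ | ⟨a, rfl⟩ <;> rcases hnot y with ⟨j, rfl⟩ | ⟨b, rfl⟩ <;>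
      rcases hnot z with ⟨k, rfl⟩ | ⟨c, rfl⟩
    · -- t t t
      left
      have h01 : i ≠ j := (htt i j).mp hxy
      have h02 : i ≠ k := (htt i k).mp hxz
      have h12 : j ≠ k := (htt j k).mp hyz
      ext w
      simp only [Set.mem_insert_iff, Set.mem_singleton_iff]
      constructor
      · rintro (rfl | rfl | rfl)
        · rcases fin3_mem i with rfl | rfl | rfl <;> tauto
        · rcases fin3_mem j with rfl | rfl | rfl <;> tauto
        · rcases fin3_mem k with rfl | rfl | rfl <;> tauto
      · rintro (rfl | rfl | rfl)
        · rcases fin3_cover i j k 0 h01 h02 h12 with h | h | h <;> rw [h] <;> tauto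
        · rcases fin3_cover i j k 1 h01 h02 h12 with h | h | h <;> rw [h] <;> tauto
        · rcases fin3_cover i j k 2 h01 h02 h12 with h | h | h <;> rw [h] <;> tauto
    · -- t t g
      exfalso
      have h1 : c = σ i := (htg i c).mp hxz
      have h2 : c = σ j := (htg j c).mp hyz
      exact (htt i j).mp hxy (hσ (h1 ▸ h2 ▸ rfl))
    · -- t g t
      exfalso
      have h1 : b = σ i := (htg i b).mp hxy
      have h2 : b = σ k := (htg k b).mp hyz.symm
      exact (htt i k).mp hxz (hσ (h1 ▸ h2 ▸ rfl))
    · -- t g g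
      exfalso
      have h1 : b = σ i := (htg i b).mp hxy
      have h2 : c = σ i := (htg i c).mp hxz
      have : b = c := h1.trans h2.symm
      exact ((hgg b c).mp hyz).ne (by rw [this])
    · -- g t t
      exfalso
      have h1 : a = σ j := (htg j a).mp hxy.symm
      have h2 : a = σ k := (htg k a).mp hxz.symm
      exact (htt j k).mp hyz (hσ (h1 ▸ h2 ▸ rfl))
    · -- g t g
      exfalso
      have h1 : a = σ j := (htg j a).mp hxy.symm
      have h2 : c = σ j := (htg j c).mp hyz
      have : a = c := h1.trans h2.symm
      exact ((hgg a c).mp hxz).ne (by rw [this])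
    · -- g g t
      exfalso
      have h1 : a = σ k := (htg k a).mp hxz.symm
      have h2 : b = σ k := (htg k b).mp hyz.symm
      have : a = b := h1.trans h2.symm
      exact ((hgg a b).mp hxy).ne (by rw [this])
    · -- g g g
      exact Or.inr ⟨a, b, c, rfl, (hgg a b).mp hxy, (hgg a c).mp hxz, (hgg b c).mp hyz⟩
  -- the new triangle
  have hTt : IsTriangleSet H ({t 0, t 1, t 2} : Set W) :=
    ⟨t 0, t 1, t 2, rfl, (htt 0 1).mpr (by decide), (htt 0 2).mpr (by decide),
      (htt 1 2).mpr (by decide)⟩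
  -- lifting a triangle of G avoiding v
  obtain ⟨S, hS, hvS⟩ := hE
  obtain ⟨a0, b0, c0, rfl, hab0, hac0, hbc0⟩ := hS
  have ha0 : a0 ≠ v := fun h => hvS (h ▸ Set.mem_insert _ _)
  have hb0 : b0 ≠ v := fun h => hvS (by rw [← h]; right; left; rfl)
  have hc0 : c0 ≠ v := fun h => hvS (by rw [← h]; right; right; rfl)
  set A : {u : V // u ≠ v} := ⟨a0, ha0⟩
  set B : {u : V // u ≠ v} := ⟨b0, hb0⟩
  set C : {u : V // u ≠ v} := ⟨c0, hc0⟩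
  have hTg : IsTriangleSet H ({g A, g B, g C} : Set W) :=
    ⟨g A, g B, g C, rfl, (hgg A B).mpr hab0, (hgg A C).mpr hac0, (hgg B C).mpr hbc0⟩
  have hne : ({t 0, t 1, t 2} : Set W) ≠ {g A, g B, g C} := by
    intro h
    have : t 0 ∈ ({g A, g B, g C} : Set W) := h ▸ Set.mem_insert _ _
    rcases this with h' | h' | h' <;> exact hsep _ _ h'
  constructor
  · exact ⟨_, _, hTt, hTg, hne⟩
  · intro T1 T2 hT1 hT2 hT12
    rcases classify T1 hT1 with rfl | ⟨a1, b1, c1, rfl, h1ab, h1ac, h1bc⟩ <;>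
      rcases classify T2 hT2 with rfl | ⟨a2, b2, c2, rfl, h2ab, h2ac, h2bc⟩
    · exact absurd rfl hT12
    · rw [Set.disjoint_left]
      rintro x (rfl | rfl | rfl) (h | h | h) <;> exact hsep _ _ h
    · rw [Set.disjoint_left]
      rintro x (rfl | rfl | rfl) (h | h | h) <;> exact hsep _ _ h.symm
    · -- both g-type
      have key : ∀ (p q r : {u : V // u ≠ v}), v ∉ ({p.1, q.1, r.1} : Set V) := by
        rintro p q r (h | h | h)
        exacts [p.2 h.symm, q.2 h.symm, r.2 h.symm]
      have hS1 : IsTriangleSet G ({a1.1, b1.1, c1.1} : Set V) :=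
        ⟨_, _, _, rfl, h1ab, h1ac, h1bc⟩
      have hS2 : IsTriangleSet G ({a2.1, b2.1, c2.1} : Set V) :=
        ⟨_, _, _, rfl, h2ab, h2ac, h2bc⟩
      have himg1 : ({a1.1, b1.1, c1.1} : Set V) = Subtype.val '' {a1, b1, c1} := by
        simp [Set.image_insert_eq]
      have himg2 : ({a2.1, b2.1, c2.1} : Set V) = Subtype.val '' {a2, b2, c2} := by
        simp [Set.image_insert_eq]
      have hg1 : ({g a1, g b1, g c1} : Set W) = g '' {a1, b1, c1} := by
        simp [Set.image_insert_eq]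
      have hg2 : ({g a2, g b2, g c2} : Set W) = g '' {a2, b2, c2} := by
        simp [Set.image_insert_eq]
      by_cases hSeq : ({a1.1, b1.1, c1.1} : Set V) = ({a2.1, b2.1, c2.1} : Set V)
      · exfalso
        apply hT12
        rw [himg1, himg2] at hSeq
        have := (Set.image_injective.mpr Subtype.val_injective) hSeq
        rw [hg1, hg2, this]
      · have hdS := hD _ _ hS1 (key a1 b1 c1) hS2 (key a2 b2 c2) hSeq
        rw [Set.disjoint_left] at hdS ⊢
        intro x hx1 hx2
        rw [hg1] at hx1
        rw [hg2] at hx2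
        obtain ⟨p, hp, rfl⟩ := hx1
        obtain ⟨q, hq, heq⟩ := hx2
        cases hg heq.symm
        have hp1 : p.1 ∈ ({a1.1, b1.1, c1.1} : Set V) := by
          rw [himg1]; exact ⟨p, hp, rfl⟩
        have hp2 : p.1 ∈ ({a2.1, b2.1, c2.1} : Set V) := by
          rw [himg2]; exact ⟨p, hq, rfl⟩
        exact hdS hp1 hp2

lemma k4_ED {V : Type} (G : SimpleGraph V) (e : V ≃ Fin 4)
    (h : ∀ a b : V, G.Adj a b ↔ a ≠ b) (v : V) :
    (∃ S, IsTriangleSet G S ∧ v ∉ S) ∧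
    (∀ S1 S2 : Set V, IsTriangleSet G S1 → v ∉ S1 → IsTriangleSet G S2 → v ∉ S2 →
      S1 ≠ S2 → Disjoint S1 S2) := by
  have einj : Function.Injective e := e.injective
  obtain ⟨h12, h13, h23, h10, h20, h30⟩ := fin4_shifts (e v)
  set a := e.symm (e v + 1)
  set b := e.symm (e v + 2)
  set c := e.symm (e v + 3)
  have hea : e a = e v + 1 := e.apply_symm_apply _
  have heb : e b = e v + 2 := e.apply_symm_apply _
  have hec : e c = e v + 3 := e.apply_symm_apply _
  have hne : ∀ x y : V, e x ≠ e y → x ≠ y := fun x y hxy h' => hxy (h' ▸ rfl)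
  constructor
  · refine ⟨{a, b, c}, ⟨a, b, c, rfl, ?_, ?_, ?_⟩, ?_⟩
    · exact (h a b).mpr (hne _ _ (by rw [hea, heb]; exact h12))
    · exact (h a c).mpr (hne _ _ (by rw [hea, hec]; exact h13))
    · exact (h b c).mpr (hne _ _ (by rw [heb, hec]; exact h23))
    · rintro (h' | h' | h')
      · exact hne _ _ (by rw [hea]; exact h10) h'.symm
      · exact hne _ _ (by rw [heb]; exact h20) h'.symm
      · exact hne _ _ (by rw [hec]; exact h30) h'.symm
  · intro S1 S2 hS1 hv1 hS2 hv2 hne12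
    exfalso
    apply hne12
    -- both equal to the set of vertices ≠ v
    have key : ∀ S : Set V, IsTriangleSet G S → v ∉ S → S = {u : V | u ≠ v} := by
      rintro S ⟨p, q, r, rfl, hpq, hpr, hqr⟩ hvS
      have hpv : p ≠ v := fun h' => hvS (h' ▸ Set.mem_insert _ _)
      have hqv : q ≠ v := fun h' => hvS (by rw [← h']; right; left; rfl)
      have hrv : r ≠ v := fun h' => hvS (by rw [← h']; right; right; rfl)
      ext u
      simp only [Set.mem_insert_iff, Set.mem_singleton_iff, Set.mem_setOf_eq]
      constructor
      · rintro (rfl | rfl | rfl)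
        exacts [hpv, hqv, hrv]
      · intro huv
        have := fin4_cover (e v) (e p) (e q) (e r) (e u)
          (fun h' => ((h p q).mp hpq) (einj h')) (fun h' => ((h p r).mp hpr) (einj h'))
          (fun h' => ((h q r).mp hqr) (einj h')) (fun h' => hpv (einj h'))
          (fun h' => hqv (einj h')) (fun h' => hrv (einj h')) (fun h' => huv (einj h'))
        rcases this with h' | h' | h'
        exacts [Or.inl (einj h'), Or.inr (Or.inl (einj h')), Or.inr (Or.inr (einj h'))]
    rw [key S1 hS1 hv1, key S2 hS2 hv2]

lemma klee_main {V : Type} (G : SimpleGraph V) (hG : IsKlee G) :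
    (∃ e : V ≃ Fin 4, ∀ a b : V, G.Adj a b ↔ a ≠ b) ∨ GoodTri G := by
  induction hG with
  | base G e h => exact Or.inl ⟨e, h⟩
  | expand G H hG h IH =>
    right
    obtain ⟨v, t, g, σ, ht, hg, hdisj, hcover, hσ, hadj, hsurj, htt, hgg, htg⟩ := h
    have hED : (∃ S, IsTriangleSet G S ∧ v ∉ S) ∧
        (∀ S1 S2 : Set _, IsTriangleSet G S1 → v ∉ S1 → IsTriangleSet G S2 → v ∉ S2 →
          S1 ≠ S2 → Disjoint S1 S2) := by
      rcases IH with ⟨e, hK4⟩ | ⟨⟨T1, T2, hT1, hT2, hT12⟩, hpw⟩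
      · exact k4_ED G e hK4 v
      · constructor
        · have hd := hpw T1 T2 hT1 hT2 hT12
          by_cases hv1 : v ∈ T1
          · exact ⟨T2, hT2, fun hv2 => Set.disjoint_left.mp hd hv1 hv2⟩
          · exact ⟨T1, hT1, hv1⟩
        · intro S1 S2 hS1 _ hS2 _ hne12
          exact hpw S1 S2 hS1 hS2 hne12
    exact expansion_good G H v t g σ ht hg hdisj hcover hσ htt hgg htg hED.1 hED.2

theorem klee_triangles_disjoint {V : Type} [Fintype V] (G : SimpleGraph V) (hG : IsKlee G)
    (h6 : 6 ≤ Fintype.card V) :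
    (∃ T1 T2 : Set V, IsTriangleSet G T1 ∧ IsTriangleSet G T2 ∧ T1 ≠ T2) ∧
    (∀ T1 T2 : Set V, IsTriangleSet G T1 → IsTriangleSet G T2 → T1 ≠ T2 →
      Disjoint T1 T2) := by
  rcases klee_main G hG with ⟨e, _⟩ | hgood
  · have : Fintype.card V = 4 := by
      rw [Fintype.card_congr e, Fintype.card_fin]
    omega
  · exact ⟨hgood.1, hgood.2⟩
end

section
/- Let G be a Hamiltonian cubic graph and let C be a collection of pairwise vertex-disjoint circuits (cycles) of G. Then there exists a perfect matching M of G which contains at least one edge of every circuit in C. -/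
open SimpleGraph
open scoped Classical

lemma aux_support_getElem {V : Type} {G : SimpleGraph V} {u v : V} (p : G.Walk u v) :
    ∀ (i : ℕ) (h : i < p.support.length), p.support[i] = p.getVert i := by
  induction p with
  | nil =>
    intro i h
    simp only [SimpleGraph.Walk.support_nil, List.length_singleton] at h
    interval_cases i
    simp [SimpleGraph.Walk.support_nil]
  | cons h' q ih =>
    intro i h
    cases i with
    | zero => simp [SimpleGraph.Walk.support_cons]
    | succ m =>
      simp only [SimpleGraph.Walk.support_cons, List.length_cons] at h
      simp only [SimpleGraph.Walk.support_cons, List.getElem_cons_succ,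
        SimpleGraph.Walk.getVert_cons_succ]
      exact ih m (by omega)

lemma aux_incid {V : Type} {G : SimpleGraph V} (H : G.Subgraph) (v : V) :
    {e | e ∈ H.edgeSet ∧ v ∈ e} = (fun u => s(v, u)) '' H.neighborSet v := by
  ext e
  constructor
  · rintro ⟨he, hv⟩
    induction e with
    | _ x y =>
      have hadj : H.Adj x y := SimpleGraph.Subgraph.mem_edgeSet.mp he
      rw [Sym2.mem_iff] at hv
      rcases hv with rfl | rfl
      · exact ⟨y, hadj, rfl⟩
      · exact ⟨x, hadj.symm, Sym2.eq_swap⟩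
  · rintro ⟨u, hu, rfl⟩
    exact ⟨SimpleGraph.Subgraph.mem_edgeSet.mpr hu, Sym2.mem_mk_left v u⟩

lemma aux_incid_ncard {V : Type} {G : SimpleGraph V} (H : G.Subgraph) (v : V) :
    {e | e ∈ H.edgeSet ∧ v ∈ e}.ncard = (H.neighborSet v).ncard := by
  rw [aux_incid H v]
  exact Set.ncard_image_of_injective _ (fun u u' h => Sym2.congr_right.mp h)

theorem hamiltonian_cubic_pm_hitting_circuits {V : Type} [Fintype V] (G : SimpleGraph V)
    (hham : G.IsHamiltonian) (hcubic : IsCubic G)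
    (𝒞 : Set G.Subgraph) (h𝒞 : IsDisjointCircuitCollection G 𝒞) :
    ∃ M : Set (Sym2 V), IsPerfectMatchingSet G M ∧ ∀ C ∈ 𝒞, ∃ f ∈ M, f ∈ C.edgeSet := by
  classical
  -- dispose of the one-vertex case
  by_cases h1 : Fintype.card V = 1
  · exfalso
    have hsub : Subsingleton V := by
      rw [← Fintype.card_le_one_iff_subsingleton]; omega
    obtain ⟨v⟩ := Fintype.card_pos_iff.mp (by omega : 0 < Fintype.card V)
    have hempty : G.neighborSet v = ∅ := by
      ext u
      simp only [SimpleGraph.mem_neighborSet, Set.mem_empty_iff_false, iff_false]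
      intro h
      exact h.ne (Subsingleton.elim _ _)
    have h3 := hcubic v
    rw [hempty] at h3
    simp at h3
  obtain ⟨a, w, hw⟩ := hham h1
  set n := w.length with hn
  have hn3 : 3 ≤ n := hw.isCycle.three_le_length
  have hncard : n = Fintype.card V := hw.length_eq
  have hsuplen : w.support.length = n + 1 := by
    rw [SimpleGraph.Walk.length_support]
  have htaillen : w.support.tail.length = n := by
    rw [List.length_tail, hsuplen]
    omega
  have hgetvert_n : w.getVert n = w.getVert 0 := by
    rw [SimpleGraph.Walk.getVert_length, SimpleGraph.Walk.getVert_zero]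
  -- injectivity of getVert on [1, n]
  have htail_inj : ∀ i j, 1 ≤ i → i ≤ n → 1 ≤ j → j ≤ n →
      w.getVert i = w.getVert j → i = j := by
    intro i j hi1 hin hj1 hjn hij
    have h1 : w.support.tail[i - 1]'(by omega) = w.getVert i := by
      rw [List.getElem_tail, aux_support_getElem w (i - 1 + 1) (by omega)]
      congr 1
      omega
    have h2 : w.support.tail[j - 1]'(by omega) = w.getVert j := by
      rw [List.getElem_tail, aux_support_getElem w (j - 1 + 1) (by omega)]
      congr 1
      omega
    have := (hw.isCycle.support_nodup.getElem_inj_iff (hi := by omega)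
      (hj := by omega)).mp (h1.trans (hij.trans h2.symm))
    omega
  -- injectivity of getVert on [0, n] up to identifying 0 and n
  have hinj' : ∀ i j, i ≤ n → j ≤ n → w.getVert i = w.getVert j →
      i = j ∨ (i = 0 ∧ j = n) ∨ (i = n ∧ j = 0) := by
    intro i j hi hj hij
    by_cases hi0 : i = 0 <;> by_cases hj0 : j = 0
    · left; omega
    · subst hi0
      have : n = j := htail_inj n j (by omega) le_rfl (by omega) hj
        (by rw [hgetvert_n]; exact hij)
      right; left; exact ⟨rfl, this.symm⟩
    · subst hj0
      have : i = n := htail_inj i n (by omega) hi (by omega) le_rfl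
        (by rw [hgetvert_n]; exact hij)
      right; right; exact ⟨this, rfl⟩
    · left; exact htail_inj i j (by omega) hi (by omega) hj hij
  -- every vertex is some getVert k with k < n
  have hsur : ∀ v : V, ∃ k, k < n ∧ w.getVert k = v := by
    intro v
    have hv := hw.mem_support v
    rw [SimpleGraph.Walk.mem_support_iff_exists_getVert] at hv
    obtain ⟨k, hk, hkle⟩ := hv
    by_cases hkn : k = n
    · exact ⟨0, by omega, by rw [← hgetvert_n, ← hkn]; exact hk⟩
    · exact ⟨k, by omega, hk⟩
  -- the neighbor set of any vertex in the hamiltonian cycle subgraph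
  have hcycnb : ∀ k, k < n → w.toSubgraph.neighborSet (w.getVert k) =
      {w.getVert (k + 1), w.getVert (if k = 0 then n - 1 else k - 1)} := by
    intro k hk
    ext u
    simp only [SimpleGraph.Subgraph.mem_neighborSet, Set.mem_insert_iff,
      Set.mem_singleton_iff]
    constructor
    · intro hadj
      rw [SimpleGraph.Walk.toSubgraph_adj_iff] at hadj
      obtain ⟨i, heq, hilen⟩ := hadj
      rw [Sym2.eq_iff] at heq
      rcases heq with ⟨h1, h2⟩ | ⟨h1, h2⟩
      · have : i = k := by
          have := hinj' i k (by omega) (by omega) h1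
          omega
        subst this
        left; exact h2.symm
      · by_cases hk0 : k = 0
        · subst hk0
          have : i + 1 = n := by
            have := hinj' (i + 1) n (by omega) le_rfl
              (by rw [hgetvert_n]; exact h2)
            omega
          right
          rw [if_pos rfl, ← h1]
          congr 1
          omega
        · have : i + 1 = k := by
            have := hinj' (i + 1) k (by omega) (by omega) h2
            omega
          right
          rw [if_neg hk0, ← h1]
          congr 1
          omega
    · intro h
      rcases h with rfl | rfl
      · exact w.toSubgraph_adj_getVert (by omega)
      · by_cases hk0 : k = 0
        · subst hk0
          rw [if_pos rfl]
          have hadj := w.toSubgraph_adj_getVert (i := n - 1) (by omega)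
          have : n - 1 + 1 = n := by omega
          rw [this, hgetvert_n] at hadj
          exact hadj.symm
        · rw [if_neg hk0]
          have hadj := w.toSubgraph_adj_getVert (i := k - 1) (by omega)
          have : k - 1 + 1 = k := by omega
          rw [this] at hadj
          exact hadj.symm
  -- degree 2 in the cycle subgraph
  have hcyc2 : ∀ v : V, (w.toSubgraph.neighborSet v).ncard = 2 := by
    intro v
    obtain ⟨k, hk, rfl⟩ := hsur v
    rw [hcycnb k hk]
    apply Set.ncard_pair
    intro hcon
    by_cases hk0 : k = 0
    · subst hk0
      rw [if_pos rfl] at hcon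
      have := hinj' 1 (n - 1) (by omega) (by omega) hcon
      omega
    · rw [if_neg hk0] at hcon
      have := hinj' (k + 1) (k - 1) (by omega) (by omega) hcon
      omega
  -- incidence counts
  have hGinc : ∀ v : V, {e | e ∈ G.edgeSet ∧ v ∈ e}.ncard = 3 := by
    intro v
    have : {e | e ∈ G.edgeSet ∧ v ∈ e} = {e | e ∈ (⊤ : G.Subgraph).edgeSet ∧ v ∈ e} := by
      rw [SimpleGraph.Subgraph.edgeSet_top]
    rw [this, aux_incid_ncard, SimpleGraph.Subgraph.neighborSet_top]
    exact hcubic v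
  have hcycinc : ∀ v : V, {e | e ∈ w.toSubgraph.edgeSet ∧ v ∈ e}.ncard = 2 := by
    intro v
    rw [aux_incid_ncard]
    exact hcyc2 v
  -- n is even
  have hneven : Even n := by
    have hdeg : ∀ v : V, G.degree v = 3 := by
      intro v
      have h3 := hcubic v
      rwa [Set.ncard_eq_toFinset_card', Set.toFinset_card,
        SimpleGraph.card_neighborSet_eq_degree] at h3
    have hh := SimpleGraph.sum_degrees_eq_twice_card_edges G
    rw [Finset.sum_congr rfl (fun v _ => hdeg v), Finset.sum_const, Finset.card_univ,
      smul_eq_mul] at hh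
    rw [Nat.even_iff]
    omega
  -- case split on whether some circuit lies entirely on the hamiltonian cycle
  by_cases hbad : ∃ C ∈ 𝒞, C.edgeSet ⊆ w.toSubgraph.edgeSet
  · -- bad case : use an alternating matching of the hamiltonian cycle
    obtain ⟨C₀, hC₀mem, hC₀sub⟩ := hbad
    have hcirc := h𝒞.1 C₀ hC₀mem
    -- neighbor sets of C₀ agree with those of the cycle
    have K : ∀ v ∈ C₀.verts, C₀.neighborSet v = w.toSubgraph.neighborSet v := by
      intro v hv
      have hsub : C₀.neighborSet v ⊆ w.toSubgraph.neighborSet v := by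
        intro u hu
        exact SimpleGraph.Subgraph.mem_edgeSet.mp
          (hC₀sub (SimpleGraph.Subgraph.mem_edgeSet.mpr hu))
      exact Set.eq_of_subset_of_ncard_le hsub
        (by rw [hcyc2 v, hcirc.2 v hv]) (Set.toFinite _)
    -- C₀ is spanning
    have huniv : C₀.verts = Set.univ := by
      obtain ⟨v₀, hv₀⟩ := hcirc.1.nonempty
      ext u
      simp only [Set.mem_univ, iff_true]
      have hucyc : u ∈ w.toSubgraph.verts := (w.mem_verts_toSubgraph).mpr (hw.mem_support u)
      have hvcyc : v₀ ∈ w.toSubgraph.verts := (w.mem_verts_toSubgraph).mpr (hw.mem_support v₀)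
      have hreach := w.toSubgraph_connected.coe ⟨v₀, hvcyc⟩ ⟨u, hucyc⟩
      obtain ⟨p⟩ := hreach
      have hmain : ∀ (x y : w.toSubgraph.verts) (_ : w.toSubgraph.coe.Walk x y),
          x.1 ∈ C₀.verts → y.1 ∈ C₀.verts := by
        intro x y p
        induction p with
        | nil => exact id
        | @cons x' z' y' hadj p ih =>
          intro hx
          apply ih
          have hadj' : w.toSubgraph.Adj x'.1 z'.1 := hadj
          have hz : z'.1 ∈ C₀.neighborSet x'.1 := by
            rw [K x'.1 hx]
            exact hadj'
          exact hz.snd_mem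
      exact hmain _ _ p hv₀
    -- the alternating matching
    refine ⟨{e | ∃ i, 2 * i + 1 < n ∧ e = s(w.getVert (2 * i), w.getVert (2 * i + 1))},
      ⟨?_, ?_⟩, ?_⟩
    · rintro e ⟨i, hi, rfl⟩
      exact (w.toSubgraph_adj_getVert (by omega : 2 * i < w.length)).adj_sub
    · intro v
      obtain ⟨k, hk, rfl⟩ := hsur v
      obtain ⟨i, hik⟩ : ∃ i, k = 2 * i ∨ k = 2 * i + 1 := ⟨k / 2, by omega⟩
      have h2i : 2 * i + 1 < n := by
        obtain ⟨m, hm⟩ := hneven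
        omega
      refine ⟨s(w.getVert (2 * i), w.getVert (2 * i + 1)), ⟨⟨i, h2i, rfl⟩, ?_⟩, ?_⟩
      · rcases hik with rfl | rfl
        · exact Sym2.mem_mk_left _ _
        · exact Sym2.mem_mk_right _ _
      · rintro e ⟨⟨j, hj, rfl⟩, hmem⟩
        rw [Sym2.mem_iff] at hmem
        have hji : j = i := by
          rcases hmem with h | h
          · have := hinj' k (2 * j) (by omega) (by omega) h
            omega
          · have := hinj' k (2 * j + 1) (by omega) (by omega) h
            omega
        subst hji
        rfl
    · intro C hC
      by_cases hCC : C = C₀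
      · rw [hCC]
        refine ⟨s(w.getVert 0, w.getVert 1), ⟨0, by omega, by norm_num⟩, ?_⟩
        have hadj : w.toSubgraph.Adj (w.getVert 0) (w.getVert 1) :=
          w.toSubgraph_adj_getVert (by omega : 0 < w.length)
        have hmem : w.getVert 1 ∈ C₀.neighborSet (w.getVert 0) := by
          rw [K _ (by rw [huniv]; trivial)]
          exact hadj
        exact SimpleGraph.Subgraph.mem_edgeSet.mpr hmem
      · exfalso
        have hdisj : Disjoint C.verts C₀.verts := h𝒞.2 hC hC₀mem hCC
        obtain ⟨v₀, hv₀⟩ := (h𝒞.1 C hC).1.nonempty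
        exact Set.disjoint_left.mp hdisj hv₀ (by rw [huniv]; trivial)
  · -- good case : the complement of the hamiltonian cycle is a perfect matching
    push_neg at hbad
    refine ⟨G.edgeSet \ w.toSubgraph.edgeSet, ⟨Set.diff_subset, ?_⟩, ?_⟩
    · intro v
      have hkey : {e | e ∈ G.edgeSet \ w.toSubgraph.edgeSet ∧ v ∈ e} =
          {e | e ∈ G.edgeSet ∧ v ∈ e} \ {e | e ∈ w.toSubgraph.edgeSet ∧ v ∈ e} := by
        ext e
        simp only [Set.mem_setOf_eq, Set.mem_diff]
        tauto
      have hsub : {e | e ∈ w.toSubgraph.edgeSet ∧ v ∈ e} ⊆ {e | e ∈ G.edgeSet ∧ v ∈ e} :=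
        fun e he => ⟨w.toSubgraph.edgeSet_subset he.1, he.2⟩
      have hc : {e | e ∈ G.edgeSet \ w.toSubgraph.edgeSet ∧ v ∈ e}.ncard = 1 := by
        rw [hkey, Set.ncard_diff hsub (Set.toFinite _), hGinc v, hcycinc v]
      obtain ⟨e₀, he₀⟩ := Set.ncard_eq_one.mp hc
      have hmem : e₀ ∈ {e | e ∈ G.edgeSet \ w.toSubgraph.edgeSet ∧ v ∈ e} := by
        rw [he₀]; exact rfl
      refine ⟨e₀, hmem, ?_⟩
      intro y hy
      have : y ∈ ({e₀} : Set (Sym2 V)) := he₀ ▸ hy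
      exact this
    · intro C hC
      obtain ⟨f, hf, hfnot⟩ := Set.not_subset.mp (hbad C hC)
      exact ⟨f, ⟨C.edgeSet_subset hf, hfnot⟩, hf⟩
end

section
/- Every Klee-graph G admits two perfect matchings M1 and M2 such that the graph obtained from G by deleting all edges of M1 ∪ M2 contains no cycle. -/
open SimpleGraph
open scoped Classical

private lemma funct_acyclic {V : Type} {G : SimpleGraph V}
    (h : ∀ a b c : V, G.Adj a b → G.Adj a c → b = c) : G.IsAcyclic := by
  intro a w hw
  cases w with
  | nil => exact hw.ne_nil rfl
  | @cons _ b _ hadj p =>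
    rw [SimpleGraph.Walk.cons_isCycle_iff] at hw
    obtain ⟨hp, he⟩ := hw
    have hnn : ¬ p.reverse.Nil := by
      rw [SimpleGraph.Walk.nil_iff_length_eq, SimpleGraph.Walk.length_reverse]
      exact fun hl => hadj.ne' (SimpleGraph.Walk.eq_of_length_eq_zero hl)
    obtain ⟨c, hac, q, hq⟩ := SimpleGraph.Walk.not_nil_iff.mp hnn
    have hbc : b = c := h a b c hadj hac
    have hmem : s(a, c) ∈ p.reverse.edges := by rw [hq]; simp
    rw [SimpleGraph.Walk.edges_reverse, List.mem_reverse] at hmem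
    exact he (hbc ▸ hmem)

private def GoodCol {V : Type} (G : SimpleGraph V) : Prop :=
  ∃ M : Fin 3 → Set (Sym2 V),
    (∀ j, IsPerfectMatchingSet G (M j)) ∧ ∀ e ∈ G.edgeSet, ∃! j, e ∈ M j


private lemma goodCol_base {V : Type} (G : SimpleGraph V) (e : V ≃ Fin 4)
    (h : ∀ a b : V, G.Adj a b ↔ a ≠ b) : GoodCol G := by
  classical
  set π : Fin 3 → Fin 4 → Fin 4 := ![![1,0,3,2],![2,3,0,1],![3,2,1,0]] with hπdef
  have hπ1 : ∀ j x, π j (π j x) = x := by decide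
  have hπ2 : ∀ j x, π j x ≠ x := by decide
  have hπ3a : ∀ x y : Fin 4, x ≠ y → ∃ j, π j x = y := by decide
  have hπ3b : ∀ (j j' : Fin 3) (x : Fin 4), π j x = π j' x → j = j' := by decide
  refine ⟨fun j => {E | ∃ x : Fin 4, E = s(e.symm x, e.symm (π j x))}, fun j => ⟨?_, ?_⟩, ?_⟩
  · rintro E ⟨x, rfl⟩
    rw [SimpleGraph.mem_edgeSet, h]
    intro hEq
    exact hπ2 j x (e.symm.injective hEq).symm
  · intro w
    refine ⟨s(e.symm (e w), e.symm (π j (e w))), ⟨⟨e w, rfl⟩, by simp⟩, ?_⟩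
    rintro E' ⟨⟨y, rfl⟩, hw⟩
    rw [Sym2.mem_iff] at hw
    rcases hw with hw | hw
    · have : y = e w := by rw [hw]; simp
      rw [this]
    · have hy : π j y = e w := by rw [hw]; simp
      have : y = π j (e w) := by rw [← hy, hπ1]
      rw [this, hπ1, Sym2.eq_swap]
  · intro E hE
    induction E using Sym2.ind with
    | _ u w =>
      have huw : u ≠ w := ((h u w).mp hE)
      have heuw : e u ≠ e w := fun hh => huw (e.injective hh)
      obtain ⟨j, hj⟩ := hπ3a (e u) (e w) heuw
      have hju : ∀ j' : Fin 3, π j' (e u) = e w → j' = j := fun j' hj' =>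
        hπ3b j' j (e u) (hj'.trans hj.symm)
      refine ⟨j, ⟨e u, by rw [hj]; simp⟩, ?_⟩
      rintro j' ⟨y, hy⟩
      rw [Sym2.eq_iff] at hy
      rcases hy with ⟨h1, h2⟩ | ⟨h1, h2⟩
      · have hy' : y = e u := by rw [h1]; simp
        subst hy'
        refine hju j' ?_
        rw [h2]; simp
      · have hy' : y = e w := by rw [h2]; simp
        subst hy'
        have he' : e u = π j' (e w) := by rw [h1]; simp
        refine hju j' ?_
        rw [he', hπ1]

private lemma goodCol_expand {V W : Type} (G : SimpleGraph V) (H : SimpleGraph W)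
    (hex : IsTriangleExpansion G H) (hG : GoodCol G) : GoodCol H := by
  classical
  obtain ⟨v, t, g, σ, ht, hg, hdisj, huniv, hσ, hσadj, hσr, hAtt, hAgg, hAtg⟩ := hex
  obtain ⟨M, hPM, hcol⟩ := hG
  have htg : ∀ (i : Fin 3) (a : {u : V // u ≠ v}), t i ≠ g a := by
    intro i a hEq
    have : t i ∈ Set.range t ∩ Set.range g := ⟨⟨i, rfl⟩, ⟨a, hEq.symm⟩⟩
    rw [hdisj] at this
    exact this
  have hclass : ∀ w : W, (∃ i, w = t i) ∨ (∃ a, w = g a) := by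
    intro w
    have hw : w ∈ Set.range t ∪ Set.range g := by rw [huniv]; trivial
    rcases hw with ⟨i, hi⟩ | ⟨a, ha⟩
    · exact Or.inl ⟨i, hi.symm⟩
    · exact Or.inr ⟨a, ha.symm⟩
  have hEdge : ∀ i, s(v, (σ i).1) ∈ G.edgeSet := fun i => (hσadj i)
  choose c hc1 hc2 using fun i => hcol _ (hEdge i)
  have hcinj : Function.Injective c := by
    intro i j hij
    have h1 := hc1 i
    have h2 := hc1 j
    rw [hij] at h1
    obtain ⟨f, -, hfu⟩ := (hPM (c j)).2 v
    have e1 := hfu _ ⟨h1, Sym2.mem_mk_left _ _⟩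
    have e2 := hfu _ ⟨h2, Sym2.mem_mk_left _ _⟩
    have heq : s(v, (σ i).1) = s(v, (σ j).1) := e1.trans e2.symm
    rw [Sym2.eq_iff] at heq
    have hss : σ i = σ j := by
      rcases heq with ⟨-, h'⟩ | ⟨h1', h2'⟩
      · exact Subtype.ext h'
      · exact absurd h2' (σ i).2
    exact hσ hss
  have hcsurj : Function.Surjective c := Finite.surjective_of_injective hcinj
  -- Fin 3 combinatorial facts
  have fin1 : ∀ i i' : Fin 3, i' ≠ i → ∃ l, i' ≠ l ∧ i ≠ l := by decide
  have fin2 : ∀ i' i l k l0 : Fin 3, i' ≠ i → i' ≠ l → i ≠ l → i' ≠ k → i' ≠ l0 → k ≠ l0 →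
      (i = k ∨ i = l0) → (k = i ∧ l0 = l) ∨ (k = l ∧ l0 = i) := by decide
  have fin3 : ∀ i k l i0 k0 l0 : Fin 3, i ≠ k → l ≠ i → l ≠ k → i0 ≠ k0 → i0 ≠ l0 → k0 ≠ l0 →
      ((i = k0 ∧ k = l0) ∨ (i = l0 ∧ k = k0)) → i0 = l := by decide
  refine ⟨fun j => {E | (∃ a b : {u : V // u ≠ v}, E = s(g a, g b) ∧ s(a.1, b.1) ∈ M j) ∨
      (∃ i, c i = j ∧ E = s(t i, g (σ i))) ∨
      (∃ i k l : Fin 3, i ≠ k ∧ i ≠ l ∧ k ≠ l ∧ c i = j ∧ E = s(t k, t l))}, fun j => ⟨?_, ?_⟩, ?_⟩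
  · -- subset of edge set
    rintro E (⟨a, b, rfl, hab⟩ | ⟨i, -, rfl⟩ | ⟨i, k, l, -, -, hkl, -, rfl⟩)
    · exact (hAgg a b).2 ((hPM j).1 hab)
    · exact (hAtg i (σ i)).2 rfl
    · exact (hAtt k l).2 hkl
  · -- every vertex covered exactly once
    intro w
    rcases hclass w with ⟨i, rfl⟩ | ⟨a, rfl⟩
    · -- w = t i
      by_cases hji : c i = j
      · refine ⟨s(t i, g (σ i)), ⟨Or.inr (Or.inl ⟨i, hji, rfl⟩), Sym2.mem_mk_left _ _⟩, ?_⟩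
        rintro E' ⟨(⟨a, b, rfl, -⟩ | ⟨i', hci', rfl⟩ | ⟨i', k, l, hik, hil, -, hci', rfl⟩), hmem⟩ <;>
          rw [Sym2.mem_iff] at hmem
        · rcases hmem with h' | h'
          · exact absurd h' (htg i a)
          · exact absurd h' (htg i b)
        · rcases hmem with h' | h'
          · rw [ht h']
          · exact absurd h' (htg i (σ i'))
        · have hii' : i' = i := hcinj (hci'.trans hji.symm)
          rcases hmem with h' | h'
          · exact absurd (ht h') (hii' ▸ hik)
          · exact absurd (ht h') (hii' ▸ hil)
      · obtain ⟨i', hi'⟩ := hcsurj j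
        have hii' : i' ≠ i := fun h' => hji (h' ▸ hi')
        obtain ⟨l, hl1, hl2⟩ := fin1 i i' hii'
        refine ⟨s(t i, t l), ⟨Or.inr (Or.inr ⟨i', i, l, hii', hl1, hl2, hi', rfl⟩),
          Sym2.mem_mk_left _ _⟩, ?_⟩
        rintro E' ⟨(⟨a, b, rfl, -⟩ | ⟨i0, hc0, rfl⟩ | ⟨i0, k, l0, h1, h2, h3, hc0, rfl⟩), hmem⟩ <;>
          rw [Sym2.mem_iff] at hmem
        · rcases hmem with h' | h'
          · exact absurd h' (htg i a)
          · exact absurd h' (htg i b)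
        · rcases hmem with h' | h'
          · rw [← ht h'] at hc0
            exact absurd hc0 hji
          · exact absurd h' (htg i (σ i0))
        · have hi0 : i0 = i' := hcinj (hc0.trans hi'.symm)
          subst hi0
          have hor : i = k ∨ i = l0 := by
            rcases hmem with h' | h'
            · exact Or.inl (ht h')
            · exact Or.inr (ht h')
          rcases fin2 i0 i l k l0 hii' hl1 hl2 h1 h2 h3 hor with ⟨hk, hl0⟩ | ⟨hk, hl0⟩
          · rw [hk, hl0]
          · rw [hk, hl0, Sym2.eq_swap]
    · -- w = g a
      obtain ⟨f, ⟨hfM, hfa⟩, hfu⟩ := (hPM j).2 a.1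
      have hfE : f ∈ G.edgeSet := (hPM j).1 hfM
      obtain ⟨x, hfx⟩ : ∃ x, s(a.1, x) = f := ⟨Sym2.Mem.other hfa, Sym2.other_spec hfa⟩
      have hax : G.Adj a.1 x := by rw [← hfx] at hfE; exact hfE
      by_cases hxv : x = v
      · -- the matching edge at a goes to v : a = σ i, use edge t i - g a
        have hGva : G.Adj v a.1 := hxv ▸ hax.symm
        obtain ⟨i, hi⟩ := hσr a hGva
        have hfeq : s(v, (σ i).1) = f := by rw [hi, ← hfx, hxv, Sym2.eq_swap]
        have hji : j = c i := hc2 i j (hfeq ▸ hfM)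
        refine ⟨s(t i, g (σ i)), ⟨Or.inr (Or.inl ⟨i, hji.symm, rfl⟩), by
          rw [hi]; exact Sym2.mem_mk_right _ _⟩, ?_⟩
        rintro E' ⟨(⟨a', b', rfl, hM'⟩ | ⟨i0, hc0, rfl⟩ | ⟨i0, k, l, -, -, -, -, rfl⟩), hmem⟩ <;>
          rw [Sym2.mem_iff] at hmem
        · have hamem : a.1 ∈ s(a'.1, b'.1) := by
            rcases hmem with h' | h'
            · rw [← hg h']; exact Sym2.mem_mk_left _ _
            · rw [← hg h']; exact Sym2.mem_mk_right _ _
          have := hfu _ ⟨hM', hamem⟩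
          have hvmem : v ∈ s(a'.1, b'.1) := by
            rw [this, ← hfx, hxv]; exact Sym2.mem_mk_right _ _
          rw [Sym2.mem_iff] at hvmem
          rcases hvmem with h' | h'
          · exact absurd h'.symm a'.2
          · exact absurd h'.symm b'.2
        · rcases hmem with h' | h'
          · exact absurd h'.symm (htg i0 a)
          · have : σ i0 = a := hg h'.symm
            rw [← hi] at this
            rw [hσ this]
        · rcases hmem with h' | h'
          · exact absurd h'.symm (htg k a)
          · exact absurd h'.symm (htg l a)
      · -- the matching edge at a stays away from v
        have hbne : (⟨x, hxv⟩ : {u : V // u ≠ v}) = ⟨x, hxv⟩ := rfl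
        refine ⟨s(g a, g ⟨x, hxv⟩), ⟨Or.inl ⟨a, ⟨x, hxv⟩, rfl, by rw [hfx]; exact hfM⟩,
          Sym2.mem_mk_left _ _⟩, ?_⟩
        rintro E' ⟨(⟨a', b', rfl, hM'⟩ | ⟨i0, hc0, rfl⟩ | ⟨i0, k, l, -, -, -, -, rfl⟩), hmem⟩ <;>
          rw [Sym2.mem_iff] at hmem
        · rcases hmem with h' | h'
          · have haa : a = a' := hg h'
            subst haa
            have := hfu _ ⟨hM', Sym2.mem_mk_left _ _⟩
            rw [← hfx, Sym2.eq_iff] at this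
            rcases this with ⟨-, hb⟩ | ⟨ha', -⟩
            · have : b' = ⟨x, hxv⟩ := Subtype.ext hb
              rw [this]
            · exact absurd ha' hax.ne
          · have haa : a = b' := hg h'
            subst haa
            have := hfu _ ⟨hM', Sym2.mem_mk_right _ _⟩
            rw [← hfx, Sym2.eq_iff] at this
            rcases this with ⟨-, ha'⟩ | ⟨ha', -⟩
            · exact absurd ha' hax.ne
            · have : a' = ⟨x, hxv⟩ := Subtype.ext ha'
              rw [this, Sym2.eq_swap]
        · rcases hmem with h' | h'
          · exact absurd h'.symm (htg i0 a)
          · have hasig : σ i0 = a := hg h'.symm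
            have hmem' : s(v, (σ i0).1) ∈ M j := hc0 ▸ hc1 i0
            have : a.1 ∈ s(v, (σ i0).1) := by rw [hasig]; exact Sym2.mem_mk_right _ _
            have heqf := hfu _ ⟨hmem', this⟩
            rw [← hfx, Sym2.eq_iff] at heqf
            rcases heqf with ⟨hv1, -⟩ | ⟨hv2, -⟩
            · exact absurd hv1.symm a.2
            · exact absurd hv2.symm hxv
        · rcases hmem with h' | h'
          · exact absurd h'.symm (htg k a)
          · exact absurd h'.symm (htg l a)
  · -- every H-edge has a unique colour
    intro E hE
    induction E using Sym2.ind with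
    | _ w1 w2 =>
    have hxy : H.Adj w1 w2 := hE
    rcases hclass w1 with ⟨i, rfl⟩ | ⟨a, rfl⟩ <;> rcases hclass w2 with ⟨k, rfl⟩ | ⟨b, rfl⟩
    · -- t i , t k
      have hik : i ≠ k := (hAtt i k).1 hxy
      have fin4 : ∀ i k : Fin 3, i ≠ k → ∃ l, l ≠ i ∧ l ≠ k := by decide
      obtain ⟨l, hl1, hl2⟩ := fin4 i k hik
      refine ⟨c l, Or.inr (Or.inr ⟨l, i, k, hl1, hl2, hik, rfl, rfl⟩), ?_⟩
      rintro j' (⟨a', b', heq, -⟩ | ⟨i0, hc0, heq⟩ | ⟨i0, k0, l0, h1, h2, h3, hc0, heq⟩)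
      · have : t i ∈ s(g a', g b') := heq ▸ Sym2.mem_mk_left _ _
        rw [Sym2.mem_iff] at this
        rcases this with h' | h'
        · exact absurd h' (htg i a')
        · exact absurd h' (htg i b')
      · have : g (σ i0) ∈ s(t i, t k) := by rw [heq]; exact Sym2.mem_mk_right _ _
        rw [Sym2.mem_iff] at this
        rcases this with h' | h'
        · exact absurd h'.symm (htg i (σ i0))
        · exact absurd h'.symm (htg k (σ i0))
      · rw [Sym2.eq_iff] at heq
        have hor : (i = k0 ∧ k = l0) ∨ (i = l0 ∧ k = k0) := by
          rcases heq with ⟨e1, e2⟩ | ⟨e1, e2⟩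
          · exact Or.inl ⟨ht e1, ht e2⟩
          · exact Or.inr ⟨ht e1, ht e2⟩
        have hl : i0 = l := fin3 i k l i0 k0 l0 hik hl1 hl2 h1 h2 h3 hor
        rw [← hc0, hl]
    · -- t i , g b
      have hb : b = σ i := (hAtg i b).1 hxy
      refine ⟨c i, Or.inr (Or.inl ⟨i, rfl, by rw [hb]⟩), ?_⟩
      rintro j' (⟨a', b', heq, -⟩ | ⟨i0, hc0, heq⟩ | ⟨i0, k0, l0, -, -, -, -, heq⟩)
      · have : t i ∈ s(g a', g b') := heq ▸ Sym2.mem_mk_left _ _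
        rw [Sym2.mem_iff] at this
        rcases this with h' | h'
        · exact absurd h' (htg i a')
        · exact absurd h' (htg i b')
      · rw [Sym2.eq_iff] at heq
        rcases heq with ⟨h1, -⟩ | ⟨h1, -⟩
        · rw [← hc0, ht h1]
        · exact absurd h1 (htg i (σ i0))
      · have : g b ∈ s(t k0, t l0) := heq ▸ Sym2.mem_mk_right _ _
        rw [Sym2.mem_iff] at this
        rcases this with h' | h'
        · exact absurd h'.symm (htg k0 b)
        · exact absurd h'.symm (htg l0 b)
    · -- g a , t k : symmetric
      have hb : a = σ k := (hAtg k a).1 hxy.symm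
      refine ⟨c k, Or.inr (Or.inl ⟨k, rfl, by rw [hb, Sym2.eq_swap]⟩), ?_⟩
      rintro j' (⟨a', b', heq, -⟩ | ⟨i0, hc0, heq⟩ | ⟨i0, k0, l0, -, -, -, -, heq⟩)
      · have : t k ∈ s(g a', g b') := heq ▸ Sym2.mem_mk_right _ _
        rw [Sym2.mem_iff] at this
        rcases this with h' | h'
        · exact absurd h' (htg k a')
        · exact absurd h' (htg k b')
      · rw [Sym2.eq_iff] at heq
        rcases heq with ⟨e1, e2⟩ | ⟨e1, e2⟩
        · exact absurd e1.symm (htg i0 a)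
        · rw [← hc0, ← ht e2]
      · have : g a ∈ s(t k0, t l0) := heq ▸ Sym2.mem_mk_left _ _
        rw [Sym2.mem_iff] at this
        rcases this with h' | h'
        · exact absurd h'.symm (htg k0 a)
        · exact absurd h'.symm (htg l0 a)
    · -- g a , g b
      have hab : G.Adj a.1 b.1 := (hAgg a b).1 hxy
      obtain ⟨j, hj, hju⟩ := hcol s(a.1, b.1) hab
      refine ⟨j, Or.inl ⟨a, b, rfl, hj⟩, ?_⟩
      rintro j' (⟨a', b', heq, hM'⟩ | ⟨i0, hc0, heq⟩ | ⟨i0, k0, l0, -, -, -, -, heq⟩)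
      · rw [Sym2.eq_iff] at heq
        rcases heq with ⟨h1, h2⟩ | ⟨h1, h2⟩
        · rw [← hg h1, ← hg h2] at hM'
          exact hju j' hM'
        · rw [← hg h1, ← hg h2] at hM'
          rw [Sym2.eq_swap] at hM'
          exact hju j' hM'
      · have : t i0 ∈ s(g a, g b) := heq ▸ Sym2.mem_mk_left _ _
        rw [Sym2.mem_iff] at this
        rcases this with h' | h'
        · exact absurd h' (htg i0 a)
        · exact absurd h' (htg i0 b)
      · have : t k0 ∈ s(g a, g b) := heq ▸ Sym2.mem_mk_left _ _
        rw [Sym2.mem_iff] at this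
        rcases this with h' | h'
        · exact absurd h' (htg k0 a)
        · exact absurd h' (htg k0 b)


theorem klee_two_pm_acyclic {V : Type} (G : SimpleGraph V) (hG : IsKlee G) :
    ∃ M1 M2 : Set (Sym2 V), IsPerfectMatchingSet G M1 ∧ IsPerfectMatchingSet G M2 ∧
      (G.deleteEdges (M1 ∪ M2)).IsAcyclic := by
  have hgood : GoodCol G := by
    induction hG with
    | base G e h => exact goodCol_base G e h
    | expand G H hG hex ih => exact goodCol_expand G H hex ih
  obtain ⟨M, hPM, hcol⟩ := hgood
  refine ⟨M 0, M 1, hPM 0, hPM 1, ?_⟩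
  apply funct_acyclic
  intro a b x hab hax
  rw [SimpleGraph.deleteEdges_adj] at hab hax
  have fin5 : ∀ j : Fin 3, j ≠ 0 → j ≠ 1 → j = 2 := by decide
  have h2 : ∀ {y : V}, G.Adj a y → s(a, y) ∉ M 0 ∪ M 1 → s(a, y) ∈ M 2 := by
    intro y hAdj hnot
    obtain ⟨j, hj, hju⟩ := hcol s(a, y) hAdj
    have hj0 : j ≠ 0 := fun h => hnot (Or.inl (h ▸ hj))
    have hj1 : j ≠ 1 := fun h => hnot (Or.inr (h ▸ hj))
    exact fin5 j hj0 hj1 ▸ hj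
  have e1 := h2 hab.1 hab.2
  have e2 := h2 hax.1 hax.2
  obtain ⟨f, -, hfu⟩ := (hPM 2).2 a
  have heq := (hfu _ ⟨e1, Sym2.mem_mk_left _ _⟩).trans (hfu _ ⟨e2, Sym2.mem_mk_left _ _⟩).symm
  rw [Sym2.eq_iff] at heq
  rcases heq with ⟨-, h'⟩ | ⟨h1', -⟩
  · exact h'
  · exact absurd h1' hax.1.ne
end

section
/- For every collection C of pairwise vertex-disjoint circuits of a Klee-graph G, there exists a perfect matching M of G which contains at least one edge of every circuit in C. -/
open SimpleGraph
open scoped Classical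

set_option linter.unnecessarySimpa false

def Nice {V : Type} (G : SimpleGraph V) : Prop :=
  ∃ M1 M2 M3 : Set (Sym2 V),
    IsPerfectMatchingSet G M1 ∧ IsPerfectMatchingSet G M2 ∧ IsPerfectMatchingSet G M3 ∧
    G.edgeSet ⊆ M1 ∪ M2 ∪ M3 ∧
    Disjoint M1 M2 ∧ Disjoint M1 M3 ∧ Disjoint M2 M3 ∧
    (SimpleGraph.fromEdgeSet (M1 ∪ M2)).Connected


def trSet {V W : Type} {v : V} (g : {u : V // u ≠ v} → W) (M : Set (Sym2 V)) : Set (Sym2 W) :=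
  {x | ∃ a b : {u : V // u ≠ v}, x = s(g a, g b) ∧ s(a.1, b.1) ∈ M}


lemma myClosure {V : Type} {K : SimpleGraph V} (hc : K.Connected) (S : Set V)
    (hne : S.Nonempty) (hcl : ∀ x ∈ S, ∀ y, K.Adj x y → y ∈ S) : S = Set.univ := by
  obtain ⟨x0, hx0⟩ := hne
  have key : ∀ (z x : V) (w : K.Walk x z), x ∈ S → z ∈ S := by
    intro z x w
    induction w with
    | nil => exact id
    | cons h p ih => intro hx; exact ih (hcl _ hx _ h)
  ext z; simp only [Set.mem_univ, iff_true]
  obtain ⟨w⟩ := hc.preconnected x0 z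
  exact key z x0 w hx0


lemma nice_base {V : Type} (G : SimpleGraph V) (e : V ≃ Fin 4)
    (h : ∀ a b : V, G.Adj a b ↔ a ≠ b) : Nice G := by
  classical
  set a : Fin 4 → V := fun i => e.symm i with ha
  have hinj : Function.Injective a := e.symm.injective
  have pm : ∀ i j k l : Fin 4, i≠j → k≠l → i≠k → i≠l → j≠k → j≠l →
      IsPerfectMatchingSet G {s(a i, a j), s(a k, a l)} := by
    intro i j k l h1 h2 h3 h4 h5 h6
    constructor
    · intro x hx
      rcases hx with rfl | rfl
      · exact G.mem_edgeSet.mpr ((h _ _).mpr fun hh => h1 (hinj hh))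
      · exact G.mem_edgeSet.mpr ((h _ _).mpr fun hh => h2 (hinj hh))
    · intro v
      obtain ⟨m, rfl⟩ : ∃ m, v = a m := ⟨e v, by simp [ha]⟩
      have hm : m = i ∨ m = j ∨ m = k ∨ m = l := by
        revert h1 h2 h3 h4 h5 h6; revert i j k l m; decide
      have mem1 : ∀ n, a n ∈ s(a i, a j) ↔ (n = i ∨ n = j) := by
        intro n; rw [Sym2.mem_iff, hinj.eq_iff, hinj.eq_iff]
      have mem2 : ∀ n, a n ∈ s(a k, a l) ↔ (n = k ∨ n = l) := by
        intro n; rw [Sym2.mem_iff, hinj.eq_iff, hinj.eq_iff]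
      rcases hm with rfl | rfl | rfl | rfl
      · refine ⟨s(a m, a j), ⟨Or.inl rfl, (mem1 m).mpr (Or.inl rfl)⟩, ?_⟩
        rintro e' ⟨(rfl | rfl), hv⟩
        · rfl
        · rcases (mem2 m).mp hv with rfl | rfl <;> simp_all
      · refine ⟨s(a i, a m), ⟨Or.inl rfl, (mem1 m).mpr (Or.inr rfl)⟩, ?_⟩
        rintro e' ⟨(rfl | rfl), hv⟩
        · rfl
        · rcases (mem2 m).mp hv with rfl | rfl <;> simp_all
      · refine ⟨s(a m, a l), ⟨Or.inr rfl, (mem2 m).mpr (Or.inl rfl)⟩, ?_⟩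
        rintro e' ⟨(rfl | rfl), hv⟩
        · rcases (mem1 m).mp hv with rfl | rfl <;> simp_all
        · rfl
      · refine ⟨s(a k, a m), ⟨Or.inr rfl, (mem2 m).mpr (Or.inr rfl)⟩, ?_⟩
        rintro e' ⟨(rfl | rfl), hv⟩
        · rcases (mem1 m).mp hv with rfl | rfl <;> simp_all
        · rfl
  refine ⟨{s(a 0, a 1), s(a 2, a 3)}, {s(a 0, a 2), s(a 1, a 3)}, {s(a 0, a 3), s(a 1, a 2)},
    pm 0 1 2 3 (by decide) (by decide) (by decide) (by decide) (by decide) (by decide),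
    pm 0 2 1 3 (by decide) (by decide) (by decide) (by decide) (by decide) (by decide),
    pm 0 3 1 2 (by decide) (by decide) (by decide) (by decide) (by decide) (by decide),
    ?_, ?_, ?_, ?_, ?_⟩
  · intro x hx
    induction x with
    | h u w =>
      have hadj : G.Adj u w := hx
      obtain ⟨p, rfl⟩ : ∃ p, u = a p := ⟨e u, by simp [ha]⟩
      obtain ⟨q, rfl⟩ : ∃ q, w = a q := ⟨e w, by simp [ha]⟩
      have hpq : p ≠ q := fun hh => ((h _ _).mp hadj) (by rw [hh])
      simp only [Set.mem_union, Set.mem_insert_iff, Set.mem_singleton_iff, Sym2.eq_iff,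
        hinj.eq_iff]
      clear hx hadj
      revert p q hpq; decide
  · rw [Set.disjoint_left]
    rintro x (rfl | rfl) hx' <;>
      [skip; skip] <;>
      · simp only [Set.mem_insert_iff, Set.mem_singleton_iff, Sym2.eq_iff, hinj.eq_iff] at hx'
        revert hx'; decide
  · rw [Set.disjoint_left]
    rintro x (rfl | rfl) hx' <;>
      [skip; skip] <;>
      · simp only [Set.mem_insert_iff, Set.mem_singleton_iff, Sym2.eq_iff, hinj.eq_iff] at hx'
        revert hx'; decide
  · rw [Set.disjoint_left]
    rintro x (rfl | rfl) hx' <;>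
      [skip; skip] <;>
      · simp only [Set.mem_insert_iff, Set.mem_singleton_iff, Sym2.eq_iff, hinj.eq_iff] at hx'
        revert hx'; decide
  · set K := SimpleGraph.fromEdgeSet ({s(a 0, a 1), s(a 2, a 3)} ∪ {s(a 0, a 2), s(a 1, a 3)} : Set (Sym2 V)) with hK
    have adj : ∀ i j : Fin 4, i ≠ j →
        (s(a i, a j) ∈ ({s(a 0, a 1), s(a 2, a 3)} ∪ {s(a 0, a 2), s(a 1, a 3)} : Set (Sym2 V))) →
        K.Adj (a i) (a j) := by
      intro i j hij hmem
      rw [hK, fromEdgeSet_adj]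
      exact ⟨hmem, fun hh => hij (hinj hh)⟩
    have a10 : K.Adj (a 1) (a 0) := by
      refine adj 1 0 (by decide) ?_
      simp [Sym2.eq_iff]
    have a20 : K.Adj (a 2) (a 0) := by
      refine adj 2 0 (by decide) ?_
      simp [Sym2.eq_iff]
    have a31 : K.Adj (a 3) (a 1) := by
      refine adj 3 1 (by decide) ?_
      simp [Sym2.eq_iff]
    have hreach : ∀ x : V, K.Reachable x (a 0) := by
      intro x
      obtain ⟨p, rfl⟩ : ∃ p, x = a p := ⟨e x, by simp [ha]⟩
      fin_cases p
      · exact SimpleGraph.Reachable.refl _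
      · exact a10.reachable
      · exact a20.reachable
      · exact a31.reachable.trans a10.reachable
    have : Nonempty V := ⟨a 0⟩
    exact ⟨fun x y => (hreach x).trans (hreach y).symm⟩

lemma nice_expand {V W : Type} (G : SimpleGraph V) (H : SimpleGraph W)
    (hTE : IsTriangleExpansion G H) (hN : Nice G) : Nice H := by
  classical
  obtain ⟨v, t, g, σ, hti, hgi, hrd, hru, hσi, hσadj, hσsurj, hAtt, hAgg, hAtg⟩ := hTE
  obtain ⟨M1, M2, M3, hM1, hM2, hM3, hcov, h12, h13, h23, hconn⟩ := hN
  -- basic facts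
  have tg_ne : ∀ i a, t i ≠ g a := by
    intro i a h
    have : t i ∈ Set.range t ∩ Set.range g := ⟨⟨i, rfl⟩, ⟨a, h.symm⟩⟩
    rw [hrd] at this
    exact this
  have hcases : ∀ w : W, (∃ i, w = t i) ∨ (∃ a, w = g a) := by
    intro w
    have : w ∈ Set.range t ∪ Set.range g := by rw [hru]; trivial
    rcases this with ⟨i, hi⟩ | ⟨a, ha⟩
    · exact Or.inl ⟨i, hi.symm⟩
    · exact Or.inr ⟨a, ha.symm⟩
  -- the partners of v
  have partner : ∀ (M : Set (Sym2 V)), IsPerfectMatchingSet G M → ∀ u : V,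
      ∃ w : V, s(u, w) ∈ M ∧ G.Adj u w ∧ ∀ e ∈ M, u ∈ e → e = s(u, w) := by
    intro M hM u
    obtain ⟨e, ⟨heM, heu⟩, huniq⟩ := hM.2 u
    obtain ⟨w, rfl⟩ := (Sym2.mem_iff_exists.mp heu)
    exact ⟨w, heM, (G.mem_edgeSet).mp (hM.1 heM), fun e' he' hue' => huniq e' ⟨he', hue'⟩⟩
  obtain ⟨w1, hw1M, hw1adj, hw1u⟩ := partner M1 hM1 v
  obtain ⟨w2, hw2M, hw2adj, hw2u⟩ := partner M2 hM2 v
  obtain ⟨w3, hw3M, hw3adj, hw3u⟩ := partner M3 hM3 v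
  obtain ⟨k1, hk1⟩ := hσsurj ⟨w1, hw1adj.ne'⟩ hw1adj
  obtain ⟨k2, hk2⟩ := hσsurj ⟨w2, hw2adj.ne'⟩ hw2adj
  obtain ⟨k3, hk3⟩ := hσsurj ⟨w3, hw3adj.ne'⟩ hw3adj
  have hσk1 : (σ k1).1 = w1 := by rw [hk1]
  have hσk2 : (σ k2).1 = w2 := by rw [hk2]
  have hσk3 : (σ k3).1 = w3 := by rw [hk3]
  have hk12 : k1 ≠ k2 := by
    rintro rfl
    rw [hk1] at hk2
    have : w1 = w2 := congrArg Subtype.val hk2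
    exact Set.disjoint_left.mp h12 hw1M (this ▸ hw2M)
  have hk13 : k1 ≠ k3 := by
    rintro rfl
    rw [hk1] at hk3
    have : w1 = w3 := congrArg Subtype.val hk3
    exact Set.disjoint_left.mp h13 hw1M (this ▸ hw3M)
  have hk23 : k2 ≠ k3 := by
    rintro rfl
    rw [hk2] at hk3
    have : w2 = w3 := congrArg Subtype.val hk3
    exact Set.disjoint_left.mp h23 hw2M (this ▸ hw3M)
  have hk21 : k2 ≠ k1 := hk12.symm
  have hk31 : k3 ≠ k1 := hk13.symm
  have hk32 : k3 ≠ k2 := hk23.symm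
  -- general PM transfer lemma
  have pm' : ∀ (M : Set (Sym2 V)) (i j l : Fin 3), IsPerfectMatchingSet G M →
      s(v, (σ i).1) ∈ M → j ≠ l → i ≠ j → i ≠ l →
      IsPerfectMatchingSet H (trSet g M ∪ {s(t i, g (σ i)), s(t j, t l)}) := by
    intro M i j l hM hvM hjl hij hil
    have notr : ∀ x ∈ trSet g M, ∀ n : Fin 3, t n ∉ x := by
      rintro x ⟨a, b, rfl, -⟩ n hn
      rcases Sym2.mem_iff.mp hn with h | h
      · exact tg_ne n a h
      · exact tg_ne n b h
    constructor
    · rintro x (⟨a, b, rfl, hab⟩ | rfl | rfl)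
      · exact H.mem_edgeSet.mpr ((hAgg a b).mpr ((G.mem_edgeSet).mp (hM.1 hab)))
      · exact H.mem_edgeSet.mpr ((hAtg i (σ i)).mpr rfl)
      · exact H.mem_edgeSet.mpr ((hAtt j l).mpr hjl)
    · intro w
      rcases hcases w with ⟨m, rfl⟩ | ⟨a, rfl⟩
      · -- w = t m
        have hm : m = i ∨ m = j ∨ m = l := by
          clear hM hvM notr
          revert hjl hij hil
          revert i j l m
          decide
        rcases hm with rfl | rfl | rfl
        · refine ⟨s(t m, g (σ m)), ⟨Or.inr (Or.inl rfl), Sym2.mem_mk_left _ _⟩, ?_⟩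
          rintro e' ⟨(he' | rfl | rfl), hv⟩
          · exact absurd hv (notr _ he' m)
          · rfl
          · rcases Sym2.mem_iff.mp hv with h | h
            · exact absurd (hti h) hij
            · exact absurd (hti h) hil
        · refine ⟨s(t m, t l), ⟨Or.inr (Or.inr rfl), Sym2.mem_mk_left _ _⟩, ?_⟩
          rintro e' ⟨(he' | rfl | rfl), hv⟩
          · exact absurd hv (notr _ he' m)
          · rcases Sym2.mem_iff.mp hv with h | h
            · exact absurd (hti h).symm hij
            · exact absurd h (tg_ne m (σ i))
          · rfl
        · refine ⟨s(t j, t m), ⟨Or.inr (Or.inr rfl), Sym2.mem_mk_right _ _⟩, ?_⟩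
          rintro e' ⟨(he' | rfl | rfl), hv⟩
          · exact absurd hv (notr _ he' m)
          · rcases Sym2.mem_iff.mp hv with h | h
            · exact absurd (hti h).symm hil
            · exact absurd h (tg_ne m (σ i))
          · rfl
      · -- w = g a
        by_cases hai : a = σ i
        · refine ⟨s(t i, g (σ i)), ⟨Or.inr (Or.inl rfl), by rw [hai]; exact Sym2.mem_mk_right _ _⟩, ?_⟩
          rintro e' ⟨(⟨a', b', rfl, hab⟩ | rfl | rfl), hv⟩
          · exfalso
            have hone : ∀ c : {u : V // u ≠ v}, c = σ i → c = a' ∨ c = b' → False := by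
              rintro c hcσ (rfl | rfl)
              · obtain ⟨ec, -, hecu⟩ := hM.2 c.1
                have e1 := hecu _ ⟨hab, Sym2.mem_mk_left _ _⟩
                have e2 := hecu _ ⟨hvM, by rw [hcσ]; exact Sym2.mem_mk_right _ _⟩
                have := e1.trans e2.symm
                rw [Sym2.eq_iff] at this
                rcases this with ⟨h1, h2⟩ | ⟨h1, h2⟩
                · exact c.2 h1
                · exact b'.2 h2
              · obtain ⟨ec, -, hecu⟩ := hM.2 c.1
                have e1 := hecu _ ⟨hab, Sym2.mem_mk_right _ _⟩
                have e2 := hecu _ ⟨hvM, by rw [hcσ]; exact Sym2.mem_mk_right _ _⟩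
                have := e1.trans e2.symm
                rw [Sym2.eq_iff] at this
                rcases this with ⟨h1, h2⟩ | ⟨h1, h2⟩
                · exact a'.2 h1
                · exact c.2 h2
            rcases Sym2.mem_iff.mp hv with h | h
            · exact hone a' ((hgi h).symm.trans hai) (Or.inl rfl)
            · exact hone b' ((hgi h).symm.trans hai) (Or.inr rfl)
          · rfl
          · rcases Sym2.mem_iff.mp hv with h | h
            · exact absurd h.symm (tg_ne j a)
            · exact absurd h.symm (tg_ne l a)
        · -- a ≠ σ i : take its M-partner
          obtain ⟨b0, hb0M, hb0adj, hb0u⟩ := partner M hM a.1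
          have hb0v : b0 ≠ v := by
            intro h
            obtain ⟨ev, -, hevu⟩ := hM.2 v
            have e1 := hevu _ ⟨hb0M, by rw [h]; exact Sym2.mem_mk_right _ _⟩
            have e2 := hevu _ ⟨hvM, Sym2.mem_mk_left _ _⟩
            have := e1.trans e2.symm
            rw [Sym2.eq_iff] at this
            rcases this with ⟨h1, h2⟩ | ⟨h1, h2⟩
            · exact a.2 h1
            · exact hai (Subtype.ext h1)
          refine ⟨s(g a, g ⟨b0, hb0v⟩), ⟨Or.inl ⟨a, ⟨b0, hb0v⟩, rfl, hb0M⟩, Sym2.mem_mk_left _ _⟩, ?_⟩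
          rintro e' ⟨(⟨a', b', rfl, hab⟩ | rfl | rfl), hv⟩
          · rcases Sym2.mem_iff.mp hv with h | h
            · have haa : a' = a := hgi h.symm
              rw [haa] at hab ⊢
              have := hb0u _ hab (Sym2.mem_mk_left _ _)
              rw [Sym2.eq_iff] at this
              have hb' : b' = ⟨b0, hb0v⟩ := by
                rcases this with ⟨h1, h2⟩ | ⟨h1, h2⟩
                · exact Subtype.ext h2
                · exact Subtype.ext (h2.trans h1)
              rw [hb']
            · have hbb : b' = a := hgi h.symm
              rw [hbb] at hab ⊢
              have := hb0u _ hab (Sym2.mem_mk_right _ _)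
              rw [Sym2.eq_iff] at this
              have ha' : a' = ⟨b0, hb0v⟩ := by
                rcases this with ⟨h1, h2⟩ | ⟨h1, h2⟩
                · exact Subtype.ext (h1.trans h2)
                · exact Subtype.ext h1
              rw [ha', Sym2.eq_swap]
          · rcases Sym2.mem_iff.mp hv with h | h
            · exact absurd h.symm (tg_ne i a)
            · exact absurd (hgi h) hai
          · rcases Sym2.mem_iff.mp hv with h | h
            · exact absurd h.symm (tg_ne j a)
            · exact absurd h.symm (tg_ne l a)
  -- the three new matchings
  have notrt : ∀ (M : Set (Sym2 V)), ∀ x ∈ trSet g M, ∀ n : Fin 3, t n ∉ x := by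
    rintro M x ⟨a, b, rfl, -⟩ n hn
    rcases Sym2.mem_iff.mp hn with h | h
    · exact tg_ne n a h
    · exact tg_ne n b h
  have trdisj : ∀ (Ma Mb : Set (Sym2 V)), Disjoint Ma Mb →
      ∀ x, x ∈ trSet g Ma → x ∈ trSet g Mb → False := by
    rintro Ma Mb hd x ⟨a, b, rfl, hab⟩ ⟨a', b', heq, hab'⟩
    rw [Sym2.eq_iff] at heq
    rcases heq with ⟨h1, h2⟩ | ⟨h1, h2⟩
    · rw [hgi h1, hgi h2] at hab
      exact Set.disjoint_left.mp hd hab hab'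
    · rw [hgi h1, hgi h2] at hab
      rw [Sym2.eq_swap] at hab
      exact Set.disjoint_left.mp hd hab hab'
  have et : ∀ n m : Fin 3, t n = t m ↔ n = m := fun n m => hti.eq_iff
  have eg : ∀ a b, g a = g b ↔ a = b := fun a b => hgi.eq_iff
  have etg : ∀ n a, (t n = g a) ↔ False := fun n a => iff_false_intro (tg_ne n a)
  have egt : ∀ n a, (g a = t n) ↔ False := fun n a => iff_false_intro (Ne.symm (tg_ne n a))
  refine ⟨trSet g M1 ∪ {s(t k1, g (σ k1)), s(t k2, t k3)},
         trSet g M2 ∪ {s(t k2, g (σ k2)), s(t k1, t k3)},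
         trSet g M3 ∪ {s(t k3, g (σ k3)), s(t k1, t k2)},
         pm' M1 k1 k2 k3 hM1 (by rw [hσk1]; exact hw1M) hk23 hk12 hk13,
         pm' M2 k2 k1 k3 hM2 (by rw [hσk2]; exact hw2M) hk13 hk12.symm hk23,
         pm' M3 k3 k1 k2 hM3 (by rw [hσk3]; exact hw3M) hk12 hk13.symm hk23.symm,
         ?_, ?_, ?_, ?_, ?_⟩
  · -- coverage
    intro x hx
    induction x with
    | h x y =>
      have hadj : H.Adj x y := hx
      rcases hcases x with ⟨i, rfl⟩ | ⟨a, rfl⟩ <;> rcases hcases y with ⟨j, rfl⟩ | ⟨b, rfl⟩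
      · -- t i, t j
        have hij : i ≠ j := (hAtt i j).mp hadj
        have hp := (show ∀ k1 k2 k3 i j : Fin 3, k1≠k2→k1≠k3→k2≠k3→i≠j→
            ((i=k2∧j=k3)∨(i=k3∧j=k2)∨(i=k1∧j=k3)∨(i=k3∧j=k1)∨(i=k1∧j=k2)∨(i=k2∧j=k1))
          from by decide) k1 k2 k3 i j hk12 hk13 hk23 hij
        rcases hp with ⟨rfl,rfl⟩|⟨rfl,rfl⟩|⟨rfl,rfl⟩|⟨rfl,rfl⟩|⟨rfl,rfl⟩|⟨rfl,rfl⟩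
        · exact Or.inl (Or.inl (Or.inr (Or.inr rfl)))
        · exact Or.inl (Or.inl (Or.inr (Or.inr Sym2.eq_swap)))
        · exact Or.inl (Or.inr (Or.inr (Or.inr rfl)))
        · exact Or.inl (Or.inr (Or.inr (Or.inr Sym2.eq_swap)))
        · exact Or.inr (Or.inr (Or.inr rfl))
        · exact Or.inr (Or.inr (Or.inr Sym2.eq_swap))
      · -- t i, g b
        have hb : b = σ i := (hAtg i b).mp hadj
        subst hb
        have hp := (show ∀ k1 k2 k3 i : Fin 3, k1≠k2→k1≠k3→k2≠k3→(i=k1∨i=k2∨i=k3)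
          from by decide) k1 k2 k3 i hk12 hk13 hk23
        rcases hp with rfl | rfl | rfl
        · exact Or.inl (Or.inl (Or.inr (Or.inl rfl)))
        · exact Or.inl (Or.inr (Or.inr (Or.inl rfl)))
        · exact Or.inr (Or.inr (Or.inl rfl))
      · -- g a, t j
        have hb : a = σ j := (hAtg j a).mp hadj.symm
        subst hb
        have hp := (show ∀ k1 k2 k3 i : Fin 3, k1≠k2→k1≠k3→k2≠k3→(i=k1∨i=k2∨i=k3)
          from by decide) k1 k2 k3 j hk12 hk13 hk23
        rcases hp with rfl | rfl | rfl
        · exact Or.inl (Or.inl (Or.inr (Or.inl Sym2.eq_swap)))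
        · exact Or.inl (Or.inr (Or.inr (Or.inl Sym2.eq_swap)))
        · exact Or.inr (Or.inr (Or.inl Sym2.eq_swap))
      · -- g a, g b
        have hab : s(a.1, b.1) ∈ G.edgeSet := G.mem_edgeSet.mpr ((hAgg a b).mp hadj)
        rcases hcov hab with (h' | h') | h'
        · exact Or.inl (Or.inl (Or.inl ⟨a, b, rfl, h'⟩))
        · exact Or.inl (Or.inr (Or.inl ⟨a, b, rfl, h'⟩))
        · exact Or.inr (Or.inl ⟨a, b, rfl, h'⟩)
  · -- Disjoint N1 N2
    rw [Set.disjoint_left]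
    rintro x (htr | rfl | rfl) hx'
    · rcases hx' with htr' | rfl | rfl
      · exact trdisj M1 M2 h12 x htr htr'
      · exact notrt M1 _ htr _ (Sym2.mem_mk_left _ _)
      · exact notrt M1 _ htr _ (Sym2.mem_mk_left _ _)
    · rcases hx' with htr' | h' | h'
      · exact notrt M2 _ htr' _ (Sym2.mem_mk_left _ _)
      · simpa only [Set.mem_singleton_iff, Sym2.eq_iff, et, eg, etg, egt, hσi.eq_iff,
          hk12, hk21, hk13, hk31, hk23, hk32, false_and, and_false, true_and, and_true,
          or_false, false_or, or_self] using h'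
      · simpa only [Set.mem_singleton_iff, Sym2.eq_iff, et, eg, etg, egt, hσi.eq_iff,
          hk12, hk21, hk13, hk31, hk23, hk32, false_and, and_false, true_and, and_true,
          or_false, false_or, or_self] using h'
    · rcases hx' with htr' | h' | h'
      · exact notrt M2 _ htr' _ (Sym2.mem_mk_left _ _)
      · simpa only [Set.mem_singleton_iff, Sym2.eq_iff, et, eg, etg, egt, hσi.eq_iff,
          hk12, hk21, hk13, hk31, hk23, hk32, false_and, and_false, true_and, and_true,
          or_false, false_or, or_self] using h'
      · simpa only [Set.mem_singleton_iff, Sym2.eq_iff, et, eg, etg, egt, hσi.eq_iff,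
          hk12, hk21, hk13, hk31, hk23, hk32, false_and, and_false, true_and, and_true,
          or_false, false_or, or_self] using h'
  · -- Disjoint N1 N3
    rw [Set.disjoint_left]
    rintro x (htr | rfl | rfl) hx'
    · rcases hx' with htr' | rfl | rfl
      · exact trdisj M1 M3 h13 x htr htr'
      · exact notrt M1 _ htr _ (Sym2.mem_mk_left _ _)
      · exact notrt M1 _ htr _ (Sym2.mem_mk_left _ _)
    · rcases hx' with htr' | h' | h'
      · exact notrt M3 _ htr' _ (Sym2.mem_mk_left _ _)
      · simpa only [Set.mem_singleton_iff, Sym2.eq_iff, et, eg, etg, egt, hσi.eq_iff,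
          hk12, hk21, hk13, hk31, hk23, hk32, false_and, and_false, true_and, and_true,
          or_false, false_or, or_self] using h'
      · simpa only [Set.mem_singleton_iff, Sym2.eq_iff, et, eg, etg, egt, hσi.eq_iff,
          hk12, hk21, hk13, hk31, hk23, hk32, false_and, and_false, true_and, and_true,
          or_false, false_or, or_self] using h'
    · rcases hx' with htr' | h' | h'
      · exact notrt M3 _ htr' _ (Sym2.mem_mk_left _ _)
      · simpa only [Set.mem_singleton_iff, Sym2.eq_iff, et, eg, etg, egt, hσi.eq_iff,
          hk12, hk21, hk13, hk31, hk23, hk32, false_and, and_false, true_and, and_true,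
          or_false, false_or, or_self] using h'
      · simpa only [Set.mem_singleton_iff, Sym2.eq_iff, et, eg, etg, egt, hσi.eq_iff,
          hk12, hk21, hk13, hk31, hk23, hk32, false_and, and_false, true_and, and_true,
          or_false, false_or, or_self] using h'
  · -- Disjoint N2 N3
    rw [Set.disjoint_left]
    rintro x (htr | rfl | rfl) hx'
    · rcases hx' with htr' | rfl | rfl
      · exact trdisj M2 M3 h23 x htr htr'
      · exact notrt M2 _ htr _ (Sym2.mem_mk_left _ _)
      · exact notrt M2 _ htr _ (Sym2.mem_mk_left _ _)
    · rcases hx' with htr' | h' | h'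
      · exact notrt M3 _ htr' _ (Sym2.mem_mk_left _ _)
      · simpa only [Set.mem_singleton_iff, Sym2.eq_iff, et, eg, etg, egt, hσi.eq_iff,
          hk12, hk21, hk13, hk31, hk23, hk32, false_and, and_false, true_and, and_true,
          or_false, false_or, or_self] using h'
      · simpa only [Set.mem_singleton_iff, Sym2.eq_iff, et, eg, etg, egt, hσi.eq_iff,
          hk12, hk21, hk13, hk31, hk23, hk32, false_and, and_false, true_and, and_true,
          or_false, false_or, or_self] using h'
    · rcases hx' with htr' | h' | h'
      · exact notrt M3 _ htr' _ (Sym2.mem_mk_left _ _)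
      · simpa only [Set.mem_singleton_iff, Sym2.eq_iff, et, eg, etg, egt, hσi.eq_iff,
          hk12, hk21, hk13, hk31, hk23, hk32, false_and, and_false, true_and, and_true,
          or_false, false_or, or_self] using h'
      · simpa only [Set.mem_singleton_iff, Sym2.eq_iff, et, eg, etg, egt, hσi.eq_iff,
          hk12, hk21, hk13, hk31, hk23, hk32, false_and, and_false, true_and, and_true,
          or_false, false_or, or_self] using h'
  · -- connectivity
    set K' := SimpleGraph.fromEdgeSet
      ((trSet g M1 ∪ {s(t k1, g (σ k1)), s(t k2, t k3)}) ∪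
       (trSet g M2 ∪ {s(t k2, g (σ k2)), s(t k1, t k3)})) with hK'
    have hadjK' : ∀ x y : W, x ≠ y →
        (s(x,y) ∈ (trSet g M1 ∪ {s(t k1, g (σ k1)), s(t k2, t k3)}) ∪
          (trSet g M2 ∪ {s(t k2, g (σ k2)), s(t k1, t k3)})) → K'.Adj x y := by
      intro x y hne hmem
      rw [hK', fromEdgeSet_adj]
      exact ⟨hmem, hne⟩
    have tne : ∀ {n m : Fin 3}, n ≠ m → t n ≠ t m := fun h hh => h (hti hh)
    have eA : K'.Adj (t k1) (g (σ k1)) :=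
      hadjK' _ _ (tg_ne k1 (σ k1)) (Or.inl (Or.inr (Or.inl rfl)))
    have eB : K'.Adj (t k2) (g (σ k2)) :=
      hadjK' _ _ (tg_ne k2 (σ k2)) (Or.inr (Or.inr (Or.inl rfl)))
    have eC : K'.Adj (t k2) (t k3) := hadjK' _ _ (tne hk23) (Or.inl (Or.inr (Or.inr rfl)))
    have eD : K'.Adj (t k1) (t k3) := hadjK' _ _ (tne hk13) (Or.inr (Or.inr (Or.inr rfl)))
    have eT : ∀ a b : {u : V // u ≠ v}, s(a.1, b.1) ∈ M1 ∪ M2 → K'.Adj (g a) (g b) := by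
      intro a b hm
      have hne : a ≠ b := by
        rintro rfl
        rcases hm with hm | hm
        · exact G.irrefl (G.mem_edgeSet.mp (hM1.1 hm))
        · exact G.irrefl (G.mem_edgeSet.mp (hM2.1 hm))
      refine hadjK' _ _ (fun hh => hne (hgi hh)) ?_
      rcases hm with hm | hm
      · exact Or.inl (Or.inl ⟨a, b, rfl, hm⟩)
      · exact Or.inr (Or.inl ⟨a, b, rfl, hm⟩)
    have r3 : K'.Reachable (t k3) (t k1) := eD.symm.reachable
    have r2 : K'.Reachable (t k2) (t k1) := eC.reachable.trans r3
    have Kv : ∀ x : V, (SimpleGraph.fromEdgeSet (M1 ∪ M2)).Adj x v → x = w1 ∨ x = w2 := by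
      intro x hx
      rw [fromEdgeSet_adj] at hx
      rcases hx.1 with hm | hm
      · left
        have := hw1u _ hm (Sym2.mem_mk_right _ _)
        rw [Sym2.eq_iff] at this
        rcases this with ⟨h1, h2⟩ | ⟨h1, h2⟩
        · exact absurd h1 hx.2
        · exact h1
      · right
        have := hw2u _ hm (Sym2.mem_mk_right _ _)
        rw [Sym2.eq_iff] at this
        rcases this with ⟨h1, h2⟩ | ⟨h1, h2⟩
        · exact absurd h1 hx.2
        · exact h1
    have aux : ∀ (x y : V) (p : (SimpleGraph.fromEdgeSet (M1 ∪ M2)).Walk x y), y = v →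
        ∀ (hx : x ≠ v), K'.Reachable (g ⟨x, hx⟩) (t k1) := by
      intro x y p
      induction p with
      | nil => intro h hx; exact absurd h hx
      | @cons c b d hadj q ih =>
        intro hd hx
        by_cases hb : b = v
        · have hadjv : (SimpleGraph.fromEdgeSet (M1 ∪ M2)).Adj c v := hb ▸ hadj
          rcases Kv c hadjv with rfl | rfl
          · have hcc : (⟨c, hx⟩ : {u : V // u ≠ v}) = σ k1 := Subtype.ext hσk1.symm
            rw [hcc]
            exact eA.symm.reachable
          · have hcc : (⟨c, hx⟩ : {u : V // u ≠ v}) = σ k2 := Subtype.ext hσk2.symm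
            rw [hcc]
            exact eB.symm.reachable.trans r2
        · have hadj' : K'.Adj (g ⟨c, hx⟩) (g ⟨b, hb⟩) := eT _ _ ((fromEdgeSet_adj _).mp hadj).1
          exact hadj'.reachable.trans (ih hd hb)
    have rg : ∀ a : {u : V // u ≠ v}, K'.Reachable (g a) (t k1) := by
      intro a
      obtain ⟨p⟩ := hconn.preconnected a.1 v
      exact aux a.1 v p rfl a.2
    have rt : ∀ i : Fin 3, K'.Reachable (t i) (t k1) := by
      intro i
      have hp := (show ∀ k1 k2 k3 i : Fin 3, k1≠k2→k1≠k3→k2≠k3→(i=k1∨i=k2∨i=k3)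
        from by decide) k1 k2 k3 i hk12 hk13 hk23
      rcases hp with rfl | rfl | rfl
      exacts [Reachable.refl _, r2, r3]
    have hall : ∀ z : W, K'.Reachable z (t k1) := by
      intro z
      rcases hcases z with ⟨i, rfl⟩ | ⟨a, rfl⟩
      · exact rt i
      · exact rg a
    have : Nonempty W := ⟨t 0⟩
    exact ⟨fun x y => (hall x).trans (hall y).symm⟩

theorem main_from_nice {V : Type} (G : SimpleGraph V) (hN : Nice G)
    (𝒞 : Set G.Subgraph)
    (h1 : ∀ C ∈ 𝒞, IsCircuitSub C)
    (h2 : 𝒞.Pairwise fun C D => Disjoint C.verts D.verts) :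
    ∃ M : Set (Sym2 V), IsPerfectMatchingSet G M ∧ ∀ C ∈ 𝒞, ∃ f ∈ M, f ∈ C.edgeSet := by
  obtain ⟨M1, M2, M3, hM1, hM2, hM3, hcov, h12, h13, h23, hconn⟩ := hN
  by_cases hall : ∀ C ∈ 𝒞, ∃ f ∈ M3, f ∈ C.edgeSet
  · exact ⟨M3, hM3, hall⟩
  push_neg at hall
  obtain ⟨C0, hC0mem, hC0avoid⟩ := hall
  -- C0 avoids M3
  set K := SimpleGraph.fromEdgeSet (M1 ∪ M2) with hK
  obtain ⟨hC0conn, hC0reg⟩ := h1 C0 hC0mem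
  -- partners
  have partner : ∀ (M : Set (Sym2 V)), IsPerfectMatchingSet G M → ∀ u : V,
      ∃ w : V, s(u, w) ∈ M ∧ G.Adj u w ∧ ∀ e ∈ M, u ∈ e → e = s(u, w) := by
    intro M hM u
    obtain ⟨e, ⟨heM, heu⟩, huniq⟩ := hM.2 u
    obtain ⟨w, rfl⟩ := (Sym2.mem_iff_exists.mp heu)
    refine ⟨w, heM, (G.mem_edgeSet).mp (hM.1 heM), fun e' he' hue' => huniq e' ⟨he', hue'⟩⟩
  -- K neighbor sets
  have Knbr : ∀ u : V, ∃ w1 w2 : V, w1 ≠ w2 ∧ s(u,w1) ∈ M1 ∧ s(u,w2) ∈ M2 ∧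
      K.neighborSet u = {w1, w2} := by
    intro u
    obtain ⟨w1, hw1, ha1, hu1⟩ := partner M1 hM1 u
    obtain ⟨w2, hw2, ha2, hu2⟩ := partner M2 hM2 u
    refine ⟨w1, w2, ?_, hw1, hw2, ?_⟩
    · rintro rfl
      exact (Set.disjoint_left.mp h12 hw1) hw2
    · ext y
      simp only [mem_neighborSet, hK, fromEdgeSet_adj, Set.mem_union, Set.mem_insert_iff,
        Set.mem_singleton_iff]
      constructor
      · rintro ⟨h | h, hne⟩
        · left
          have := hu1 _ h (Sym2.mem_mk_left u y)
          have : y = w1 := by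
            rw [Sym2.eq_iff] at this
            tauto
          exact this
        · right
          have := hu2 _ h (Sym2.mem_mk_left u y)
          rw [Sym2.eq_iff] at this
          tauto
      · rintro (rfl | rfl)
        · exact ⟨Or.inl hw1, ha1.ne⟩
        · exact ⟨Or.inr hw2, ha2.ne⟩
  -- C0 edges in M1 ∪ M2
  have hC0sub : ∀ u w, C0.Adj u w → s(u,w) ∈ M1 ∪ M2 := by
    intro u w h
    have he : s(u,w) ∈ G.edgeSet := (C0.adj_sub h)
    rcases hcov he with (h' | h') | h'
    · exact Or.inl h'
    · exact Or.inr h'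
    · exact absurd ((SimpleGraph.Subgraph.mem_edgeSet).mpr h) (by simpa using hC0avoid _ h')
  -- neighbor sets agree on C0.verts
  have hnbr_eq : ∀ u ∈ C0.verts, C0.neighborSet u = K.neighborSet u := by
    intro u hu
    obtain ⟨w1, w2, hne, hw1, hw2, hKn⟩ := Knbr u
    have hsub : C0.neighborSet u ⊆ K.neighborSet u := by
      intro y hy
      have hadj : C0.Adj u y := hy
      have : s(u,y) ∈ M1 ∪ M2 := hC0sub u y hadj
      simp only [mem_neighborSet, hK, fromEdgeSet_adj]
      exact ⟨this, (C0.adj_sub hadj).ne⟩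
    have hfin : (K.neighborSet u).Finite := by
      rw [hKn]; exact (Set.finite_singleton w2).insert w1
    have hcard : (K.neighborSet u).ncard ≤ (C0.neighborSet u).ncard := by
      rw [hKn, Set.ncard_pair hne, hC0reg u hu]
    exact Set.eq_of_subset_of_ncard_le hsub hcard hfin
  have hcl : ∀ x ∈ C0.verts, ∀ y, K.Adj x y → y ∈ C0.verts := by
    intro x hx y hxy
    have : y ∈ C0.neighborSet x := by rw [hnbr_eq x hx]; exact hxy
    exact this.snd_mem
  have hne : C0.verts.Nonempty := by
    obtain ⟨⟨x, hx⟩⟩ := hC0conn.nonempty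
    exact ⟨x, hx⟩
  have huniv : C0.verts = Set.univ := myClosure hconn _ hne hcl
  have hsingle : ∀ C ∈ 𝒞, C = C0 := by
    intro D hD
    by_contra hDne
    have hdisj := h2 hD hC0mem hDne
    obtain ⟨⟨x, hx⟩⟩ := (h1 D hD).1.nonempty
    exact Set.disjoint_left.mp hdisj hx (huniv ▸ Set.mem_univ x)
  refine ⟨M1, hM1, ?_⟩
  intro C hC
  rw [hsingle C hC]
  obtain ⟨u, hu⟩ := hne
  obtain ⟨w1, w2, hww, hw1, hw2, hKn⟩ := Knbr u
  have : w1 ∈ C0.neighborSet u := by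
    rw [hnbr_eq u hu, hKn]; exact Set.mem_insert w1 {w2}
  exact ⟨s(u,w1), hw1, (SimpleGraph.Subgraph.mem_edgeSet).mpr this⟩

lemma klee_nice {V : Type} (G : SimpleGraph V) (h : IsKlee G) : Nice G := by
  induction h with
  | base G e hh => exact nice_base G e hh
  | expand G H hG hTE ih => exact nice_expand G H hTE ih

theorem klee_pm_hitting_circuits {V : Type} (G : SimpleGraph V) (hG : IsKlee G)
    (𝒞 : Set G.Subgraph) (h𝒞 : IsDisjointCircuitCollection G 𝒞) :
    ∃ M : Set (Sym2 V), IsPerfectMatchingSet G M ∧ ∀ C ∈ 𝒞, ∃ f ∈ M, f ∈ C.edgeSet :=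
  main_from_nice G (klee_nice G hG) 𝒞 h𝒞.1 h𝒞.2
end
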